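/- arXiv:1908.00857 — 9 statements merged into one kernel-verified Lean document; each statement's English description precedes it below -/
import Mathlib

section
/- Let p, q, r be integers with p ≠ 0, gcd(p, q) = 1, |p| ≥ q ≥ 1, r ≥ 2 and r even, and set n = qr, m = |p|·r. Then the set { x ∈ ℤ^n : T_n^m(x) = x and C(x) = {0,1,2,3} } equals { (a, a, …, a) ∈ ℤ^n (the concatenation of q copies of a) : a ∈ A01 ∪ A12 ∪ A23 } with the two constant vectors (1,1,…,1) and (2,2,…,2) removed. -/
/-- The twist map `T_n : ℤ^n → ℤ^n`,
`T_n(x_1,…,x_n) = (2x_1 − x_2, 2x_1 − x_3, …, 2x_1 − x_n, x_1)` (0-indexed). -/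
def twist (n : ℕ) (x : Fin n → ℤ) : Fin n → ℤ :=
  fun i => if h : (i : ℕ) + 1 < n then 2 * x ⟨0, i.pos⟩ - x ⟨(i : ℕ) + 1, h⟩ else x ⟨0, i.pos⟩

/-- The set of colors `C(x) = { (T_n^k(x))_i : 0 ≤ k < m, 1 ≤ i ≤ n }`. -/
def colors (n m : ℕ) (x : Fin n → ℤ) : Set ℤ :=
  {c | ∃ k, k < m ∧ ∃ i : Fin n, (twist n)^[k] x i = c}

/-- The `j`-th block (of length `R`) of a vector `x ∈ ℤ^{QR}`. -/
def blk (Q R : ℕ) (x : Fin (Q * R) → ℤ) (j : Fin Q) (i : Fin R) : ℤ :=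
  x ⟨(j : ℕ) * R + (i : ℕ), by
    calc (j : ℕ) * R + (i : ℕ) < (j : ℕ) * R + R := Nat.add_lt_add_left i.2 _
      _ = ((j : ℕ) + 1) * R := (Nat.succ_mul _ _).symm
      _ ≤ Q * R := Nat.mul_le_mul_right R j.2⟩

/-- `Δ(a) = a_1 − a_2 + a_3 − ⋯ + (−1)^{r+1} a_r` (0-indexed signs `(−1)^i`). -/
def delta (R : ℕ) (a : Fin R → ℤ) : ℤ := ∑ i : Fin R, (-1 : ℤ) ^ (i : ℕ) * a i


/-- `A01`: tuples in `{0,1}^r` with `a_1 = a_r = 1` and `a_{2i} = a_{2i+1}` for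
`i = 1,…,r/2−1` (1-indexed); 0-indexed: the pairs `(k, k+1)` with `k` odd agree. -/
def A01 (R : ℕ) : Set (Fin R → ℤ) :=
  {a | (∀ i, a i = 0 ∨ a i = 1) ∧
       (∀ i : Fin R, (i : ℕ) = 0 ∨ (i : ℕ) = R - 1 → a i = 1) ∧
       (∀ k : Fin R, (k : ℕ) % 2 = 1 → ∀ h : (k : ℕ) + 1 < R, a ⟨(k : ℕ) + 1, h⟩ = a k)}

/-- `A12`: tuples in `{1,2}^r` with `a_{2i−1} = a_{2i}` for `i = 1,…,r/2`
(1-indexed); 0-indexed: the pairs `(k, k+1)` with `k` even agree. -/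
def A12 (R : ℕ) : Set (Fin R → ℤ) :=
  {a | (∀ i, a i = 1 ∨ a i = 2) ∧
       (∀ k : Fin R, (k : ℕ) % 2 = 0 → ∀ h : (k : ℕ) + 1 < R, a ⟨(k : ℕ) + 1, h⟩ = a k)}

/-- `A23`: tuples in `{2,3}^r` with `a_1 = a_r = 2` and `a_{2i} = a_{2i+1}` for
`i = 1,…,r/2−1` (1-indexed); 0-indexed: the pairs `(k, k+1)` with `k` odd agree. -/
def A23 (R : ℕ) : Set (Fin R → ℤ) :=
  {a | (∀ i, a i = 2 ∨ a i = 3) ∧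
       (∀ i : Fin R, (i : ℕ) = 0 ∨ (i : ℕ) = R - 1 → a i = 2) ∧
       (∀ k : Fin R, (k : ℕ) % 2 = 1 → ∀ h : (k : ℕ) + 1 < R, a ⟨(k : ℕ) + 1, h⟩ = a k)}

namespace Stmt8Aux


def cseq (s : ℕ → ℤ) : ℕ → ℤ
  | 0 => 0
  | k+1 => cseq s k + 2 * (-1)^k * s k

def seqOf {n : ℕ} (x : Fin n → ℤ) : ℕ → ℤ :=
  fun j => if h : j % n < n then x ⟨j % n, h⟩ else 0

lemma seqOf_eq {n : ℕ} (hn : 0 < n) (x : Fin n → ℤ) (j : ℕ) :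
    seqOf x j = x ⟨j % n, Nat.mod_lt _ hn⟩ := by
  simp [seqOf, Nat.mod_lt _ hn]

lemma seqOf_lt {n : ℕ} (x : Fin n → ℤ) (j : ℕ) (h : j < n) :
    seqOf x j = x ⟨j, h⟩ := by
  rw [seqOf_eq (lt_of_le_of_lt (Nat.zero_le _) h) x j]
  congr 1
  exact Fin.ext (Nat.mod_eq_of_lt h)

lemma seqOf_mod {n : ℕ} (hn : 0 < n) (x : Fin n → ℤ) (j : ℕ) :
    seqOf x (j % n) = seqOf x j := by
  rw [seqOf_eq hn, seqOf_eq hn]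
  congr 1
  exact Fin.ext (Nat.mod_mod_of_dvd j (dvd_refl n))

lemma seqOf_add_n {n : ℕ} (hn : 0 < n) (x : Fin n → ℤ) (j : ℕ) :
    seqOf x (j + n) = seqOf x j := by
  rw [seqOf_eq hn, seqOf_eq hn]
  congr 1
  exact Fin.ext (Nat.add_mod_right j n)

lemma twist_iter {n : ℕ} (hn : 0 < n) (x : Fin n → ℤ) :
    ∀ (k : ℕ) (i : Fin n),
      (twist n)^[k] x i = cseq (seqOf x) k + (-1)^k * seqOf x ((i : ℕ) + k) := by
  intro k
  induction k with
  | zero =>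
    intro i
    simp [cseq, seqOf_lt x i i.2]
  | succ k ih =>
    intro i
    rw [Function.iterate_succ_apply']
    have h0 := ih ⟨0, hn⟩
    simp only [twist]
    by_cases h : (i : ℕ) + 1 < n
    · rw [dif_pos h, h0, ih ⟨(i : ℕ) + 1, h⟩]
      have hs : ((⟨(i:ℕ)+1, h⟩ : Fin n) : ℕ) + k = (i : ℕ) + (k + 1) := by simp; omega
      have hz : ((⟨0, hn⟩ : Fin n) : ℕ) + k = k := by simp
      rw [hs, hz]
      show 2 * (cseq (seqOf x) k + (-1)^k * seqOf x k) - (cseq (seqOf x) k + (-1)^k * seqOf x ((i:ℕ)+(k+1)))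
        = cseq (seqOf x) k + 2*(-1)^k * seqOf x k + (-1)^(k+1) * seqOf x ((i:ℕ)+(k+1))
      rw [pow_succ]
      ring
    · rw [dif_neg h, h0]
      have hz : ((⟨0, hn⟩ : Fin n) : ℕ) + k = k := by simp
      rw [hz]
      have hin : (i : ℕ) + (k + 1) = k + n := by have := i.2; omega
      rw [show cseq (seqOf x) (k+1) = cseq (seqOf x) k + 2*(-1)^k * seqOf x k from rfl,
          hin, seqOf_add_n hn, pow_succ]
      ring

lemma index_juggle {n : ℕ} (hn : 0 < n) (j k : ℕ) :
    ((j + (n - k % n)) % n + k) % n = j % n := by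
  rw [Nat.mod_add_mod]
  have h1 : j + (n - k % n) + k = j + n * (1 + k / n) := by
    have h2 := Nat.mod_lt k hn
    have h3 := Nat.div_add_mod k n
    rw [Nat.mul_add, Nat.mul_one]
    generalize n * (k / n) = t at *
    omega
  rw [h1, Nat.add_mul_mod_self_left]

lemma colors_char {n : ℕ} (hn : 0 < n) (m : ℕ) (x : Fin n → ℤ) :
    colors n m x
      = {c | ∃ k, k < m ∧ ∃ j : ℕ, c = cseq (seqOf x) k + (-1)^k * seqOf x j} := by
  ext c
  simp only [colors, Set.mem_setOf_eq]
  constructor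
  · rintro ⟨k, hk, i, rfl⟩
    exact ⟨k, hk, (i : ℕ) + k, twist_iter hn x k i⟩
  · rintro ⟨k, hk, j, rfl⟩
    refine ⟨k, hk, ⟨(j + (n - k % n)) % n, Nat.mod_lt _ hn⟩, ?_⟩
    rw [twist_iter hn x k]
    congr 1
    show (-1:ℤ)^k * seqOf x (((j + (n - k % n)) % n) + k) = (-1)^k * seqOf x j
    congr 1
    rw [← seqOf_mod hn x (((j + (n - k % n)) % n) + k), index_juggle hn, seqOf_mod hn]

lemma period_mul {s : ℕ → ℤ} {R : ℕ} (h : ∀ j, s (j + R) = s j) :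
    ∀ (t j : ℕ), s (j + t * R) = s j := by
  intro t
  induction t with
  | zero => intro j; simp
  | succ t ih =>
    intro j
    have he : j + (t+1) * R = (j + R) + t * R := by ring
    rw [he, ih, h]

lemma period_to_mod {s : ℕ → ℤ} {R : ℕ} (h : ∀ j, s (j + R) = s j) (j : ℕ) :
    s j = s (j % R) := by
  rcases Nat.eq_zero_or_pos R with h0 | h0
  · subst h0; simp
  · have h1 := period_mul h (j / R) (j % R)
    rw [← h1]
    congr 1
    rw [Nat.mul_comm]
    exact (Nat.mod_add_div j R).symm

lemma exists_combo {P Q : ℕ} (hP : 0 < P) (hQ : 0 < Q) (hco : Nat.Coprime P Q) :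
    ∃ k l : ℕ, k * P = 1 + l * Q := by
  have h := Nat.ModEq.pow_totient hco
  have htot : 0 < Nat.totient Q := Nat.totient_pos.mpr hQ
  refine ⟨P ^ (Nat.totient Q - 1), ?_⟩
  have hpow : P ^ (Nat.totient Q - 1) * P = P ^ Nat.totient Q := by
    rw [← pow_succ]
    congr 1
    omega
  have h1 : 1 ≤ P ^ Nat.totient Q := Nat.one_le_pow _ _ hP
  have hdvd : Q ∣ P ^ Nat.totient Q - 1 := (Nat.modEq_iff_dvd' h1).mp h.symm
  obtain ⟨l, hl⟩ := hdvd
  refine ⟨l, ?_⟩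
  rw [hpow, mul_comm l Q]
  omega

lemma period_gcd {s : ℕ → ℤ} {m n R : ℕ}
    (hm : ∀ j, s (j + m) = s j) (hn : ∀ j, s (j + n) = s j)
    (h : ∃ k l : ℕ, k * m = R + l * n) : ∀ j, s (j + R) = s j := by
  obtain ⟨k, l, hkl⟩ := h
  intro j
  have h1 : s (j + k * m) = s j := period_mul hm k j
  have h2 : s ((j + R) + l * n) = s (j + R) := period_mul hn l (j + R)
  have h3 : j + k * m = (j + R) + l * n := by omega
  rw [h3, h2] at h1
  exact h1




lemma cseq_zero (s : ℕ → ℤ) : cseq s 0 = 0 := rfl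
lemma cseq_succ (s : ℕ → ℤ) (k : ℕ) : cseq s (k+1) = cseq s k + 2 * (-1)^k * s k := rfl

lemma npow_even {k : ℕ} (h : k % 2 = 0) : (-1:ℤ)^k = 1 :=
  Even.neg_one_pow (Nat.even_iff.mpr h)
lemma npow_odd {k : ℕ} (h : k % 2 = 1) : (-1:ℤ)^k = -1 :=
  Odd.neg_one_pow (Nat.odd_iff.mpr h)

lemma cseq_even (s : ℕ → ℤ) : ∀ k, ∃ t, cseq s k = 2 * t := by
  intro k
  induction k with
  | zero => exact ⟨0, rfl⟩
  | succ k ih =>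
    obtain ⟨t, ht⟩ := ih
    exact ⟨t + (-1)^k * s k, by rw [cseq_succ, ht]; ring⟩

lemma cseq_one (s : ℕ → ℤ) : cseq s 1 = 2 * s 0 := by
  rw [cseq_succ, cseq_zero]; ring

lemma mod_pred {R m : ℕ} (hR : 0 < R) (hdvd : R ∣ m) (hm : 0 < m) :
    (m - 1) % R = R - 1 := by
  obtain ⟨e, rfl⟩ := hdvd
  cases e with
  | zero => simp at hm
  | succ e' =>
    have h1 : R * (e' + 1) - 1 = (R - 1) + e' * R := by
      rw [Nat.mul_succ, Nat.mul_comm]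
      omega
    rw [h1, Nat.add_mul_mod_self_right, Nat.mod_eq_of_lt (by omega)]

theorem forward_core (s : ℕ → ℤ) (m R : ℕ) (hR2 : 2 ≤ R) (hRe : Even R)
    (hRm : R ≤ m) (hme : Even m) (hRdvd : R ∣ m)
    (hper : ∀ j, s (j + R) = s j) (hcm : cseq s m = 0)
    (hsub : ∀ k, k < m → ∀ j : ℕ,
      0 ≤ cseq s k + (-1)^k * s j ∧ cseq s k + (-1)^k * s j ≤ 3)
    (hcov : ∀ v : ℤ, 0 ≤ v → v ≤ 3 →
      ∃ k, k < m ∧ ∃ j : ℕ, v = cseq s k + (-1)^k * s j) :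
    ((∀ j, s j = 0 ∨ s j = 1) ∧ s 0 = 1 ∧ s (R-1) = 1 ∧
      (∀ k, k % 2 = 1 → k + 1 < R → s (k+1) = s k) ∧ (∃ j, s j = 0))
    ∨ ((∀ j, s j = 1 ∨ s j = 2) ∧
      (∀ k, k % 2 = 0 → k + 1 < R → s (k+1) = s k) ∧ (∃ j, s j = 1) ∧ (∃ j, s j = 2))
    ∨ ((∀ j, s j = 2 ∨ s j = 3) ∧ s 0 = 2 ∧ s (R-1) = 2 ∧
      (∀ k, k % 2 = 1 → k + 1 < R → s (k+1) = s k) ∧ (∃ j, s j = 3)) := by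
  have hm0 : 0 < m := by omega
  have hm1 : 1 < m := by omega
  have hme2 : m % 2 = 0 := Nat.even_iff.mp hme
  have hS : ∀ j, s j = 0 ∨ s j = 1 ∨ s j = 2 ∨ s j = 3 := by
    intro j
    have h := hsub 0 hm0 j
    rw [cseq_zero] at h
    simp only [pow_zero, one_mul] at h
    omega
  -- parity of k vs membership
  have hn03 : ¬((∃ j, s j = 0) ∧ (∃ j, s j = 3)) := by
    rintro ⟨⟨j0, h0⟩, ⟨j3, h3⟩⟩
    have ha := hsub 1 hm1 j0
    have hb := hsub 1 hm1 j3
    rw [cseq_one, h0, pow_one] at ha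
    rw [cseq_one, h3, pow_one] at hb
    have := hS 0
    omega
  have hn02 : ¬((∃ j, s j = 0) ∧ (∃ j, s j = 2)) := by
    rintro ⟨⟨j0, h0⟩, ⟨j2, h2⟩⟩
    obtain ⟨k, hk, j, hv⟩ := hcov 3 (by norm_num) (by norm_num)
    obtain ⟨t, ht⟩ := cseq_even s k
    have ha := hsub k hk j0
    have hb := hsub k hk j2
    rcases Nat.even_or_odd k with he | ho
    · rw [he.neg_one_pow, ht, h0] at ha
      rw [he.neg_one_pow, ht, h2] at hb
      rw [he.neg_one_pow, ht] at hv
      have h3 : s j = 3 := by omega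
      exact hn03 ⟨⟨j0, h0⟩, ⟨j, h3⟩⟩
    · rw [ho.neg_one_pow, ht, h0] at ha
      rw [ho.neg_one_pow, ht, h2] at hb
      rw [ho.neg_one_pow, ht] at hv
      have := hS j
      omega
  have hn13 : ¬((∃ j, s j = 1) ∧ (∃ j, s j = 3)) := by
    rintro ⟨⟨j1, h1⟩, ⟨j3, h3⟩⟩
    obtain ⟨k, hk, j, hv⟩ := hcov 0 (by norm_num) (by norm_num)
    obtain ⟨t, ht⟩ := cseq_even s k
    have ha := hsub k hk j1
    have hb := hsub k hk j3
    rcases Nat.even_or_odd k with he | ho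
    · rw [he.neg_one_pow, ht, h1] at ha
      rw [he.neg_one_pow, ht, h3] at hb
      rw [he.neg_one_pow, ht] at hv
      have h0 : s j = 0 := by omega
      exact hn03 ⟨⟨j, h0⟩, ⟨j3, h3⟩⟩
    · rw [ho.neg_one_pow, ht, h1] at ha
      rw [ho.neg_one_pow, ht, h3] at hb
      rw [ho.neg_one_pow, ht] at hv
      have := hS j
      omega
  have h13 : (∃ j, s j = 1) ∨ (∃ j, s j = 3) := by
    obtain ⟨k, hk, j, hv⟩ := hcov 1 (by norm_num) (by norm_num)
    obtain ⟨t, ht⟩ := cseq_even s k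
    rcases Nat.even_or_odd k with he | ho
    · rw [he.neg_one_pow, ht] at hv
      rcases hS j with h | h | h | h
      · rw [h] at hv; omega
      · exact Or.inl ⟨j, h⟩
      · rw [h] at hv; omega
      · exact Or.inr ⟨j, h⟩
    · rw [ho.neg_one_pow, ht] at hv
      rcases hS j with h | h | h | h
      · rw [h] at hv; omega
      · exact Or.inl ⟨j, h⟩
      · rw [h] at hv; omega
      · exact Or.inr ⟨j, h⟩
  have h02 : (∃ j, s j = 0) ∨ (∃ j, s j = 2) := by
    obtain ⟨k, hk, j, hv⟩ := hcov 2 (by norm_num) (by norm_num)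
    obtain ⟨t, ht⟩ := cseq_even s k
    rcases Nat.even_or_odd k with he | ho
    · rw [he.neg_one_pow, ht] at hv
      rcases hS j with h | h | h | h
      · exact Or.inl ⟨j, h⟩
      · rw [h] at hv; omega
      · exact Or.inr ⟨j, h⟩
      · rw [h] at hv; omega
    · rw [ho.neg_one_pow, ht] at hv
      rcases hS j with h | h | h | h
      · exact Or.inl ⟨j, h⟩
      · rw [h] at hv; omega
      · exact Or.inr ⟨j, h⟩
      · rw [h] at hv; omega
  by_cases hP0 : ∃ j, s j = 0
  · -- case A01
    obtain ⟨j0, h0⟩ := hP0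
    have hnot2 : ∀ j, s j ≠ 2 := fun j h => hn02 ⟨⟨j0, h0⟩, ⟨j, h⟩⟩
    have hnot3 : ∀ j, s j ≠ 3 := fun j h => hn03 ⟨⟨j0, h0⟩, ⟨j, h⟩⟩
    have hval : ∀ j, s j = 0 ∨ s j = 1 := by
      intro j
      have := hS j
      have := hnot2 j
      have := hnot3 j
      omega
    obtain ⟨j1, h1⟩ : ∃ j, s j = 1 := by
      rcases h13 with h | ⟨j, h⟩
      · exact h
      · exact absurd h (hnot3 j)
    have hs0 : s 0 = 1 := by
      have ha := hsub 1 hm1 j0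
      have hb := hsub 1 hm1 j1
      rw [cseq_one, h0, pow_one] at ha
      rw [cseq_one, h1, pow_one] at hb
      have := hval 0
      omega
    have codd : ∀ t, 2*t + 1 < m → cseq s (2*t+1) = 2 := by
      intro t
      induction t with
      | zero => intro _; rw [show 2*0+1 = 1 by ring, cseq_one, hs0]; ring
      | succ t ih =>
        intro hlt
        have hlt' : 2*t + 1 < m := by omega
        have hc := ih hlt'
        have key : cseq s (2*t+3) = 2 - 2 * s (2*t+1) + 2 * s (2*t+2) := by
          rw [show 2*t+3 = (2*t+2)+1 by ring, cseq_succ, cseq_succ, hc,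
              npow_odd (k := 2*t+1) (by omega), npow_even (k := 2*t+2) (by omega)]
          ring
        have hlt'' : 2*t+3 < m := by omega
        have ha := hsub (2*t+3) hlt'' j0
        have hb := hsub (2*t+3) hlt'' j1
        rw [npow_odd (k := 2*t+3) (by omega), h0] at ha
        rw [npow_odd (k := 2*t+3) (by omega), h1] at hb
        have v1 := hval (2*t+1)
        have v2 := hval (2*t+2)
        rw [show 2*(t+1)+1 = 2*t+3 by ring]
        omega
    have hcodd : ∀ k, k % 2 = 1 → k < m → cseq s k = 2 := by
      intro k hk1 hkm
      obtain ⟨t, rfl⟩ : ∃ t, k = 2*t+1 := ⟨k/2, by omega⟩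
      exact codd t hkm
    have hpair : ∀ k, k % 2 = 1 → k + 1 < R → s (k+1) = s k := by
      intro k hk1 hkR
      have hkm : k < m := by omega
      have hck := hcodd k hk1 hkm
      have hck2 : cseq s (k+2) = 2 := by
        rcases Nat.lt_or_ge (k+2) m with h | h
        · exact hcodd _ (by omega) h
        · exfalso; omega
      rw [show k+2 = (k+1)+1 by ring, cseq_succ, cseq_succ, hck,
          npow_odd hk1, npow_even (k := k+1) (by omega)] at hck2
      omega
    have hslast : s (R-1) = 1 := by
      have hcm1 : cseq s (m-1) = 2 := hcodd (m-1) (by omega) (by omega)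
      have hsm1 : s (m-1) = 1 := by
        cases m with
        | zero => omega
        | succ mm =>
          have e : cseq s (mm+1) = cseq s mm + 2*(-1)^mm * s mm := cseq_succ s mm
          simp only [Nat.succ_sub_one] at hcm1
          rw [e, hcm1, npow_odd (k := mm) (by omega)] at hcm
          simp only [Nat.succ_sub_one]
          omega
      rw [period_to_mod hper (m-1), mod_pred (by omega) hRdvd hm0] at hsm1
      exact hsm1
    exact Or.inl ⟨hval, hs0, hslast, hpair, ⟨j0, h0⟩⟩
  · have hP2 : ∃ j, s j = 2 := by
      rcases h02 with h | h
      · exact absurd h hP0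
      · exact h
    obtain ⟨j2, h2⟩ := hP2
    by_cases hP3 : ∃ j, s j = 3
    · -- case A23
      obtain ⟨j3, h3⟩ := hP3
      have hnot1 : ∀ j, s j ≠ 1 := fun j h => hn13 ⟨⟨j, h⟩, ⟨j3, h3⟩⟩
      have hval : ∀ j, s j = 2 ∨ s j = 3 := by
        intro j
        have := hS j
        have := hnot1 j
        have : s j ≠ 0 := fun h => hP0 ⟨j, h⟩
        omega
      have hs0 : s 0 = 2 := by
        have ha := hsub 1 hm1 j2
        have hb := hsub 1 hm1 j3
        rw [cseq_one, h2, pow_one] at ha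
        rw [cseq_one, h3, pow_one] at hb
        have := hval 0
        omega
      have codd : ∀ t, 2*t + 1 < m → cseq s (2*t+1) = 4 := by
        intro t
        induction t with
        | zero => intro _; rw [show 2*0+1 = 1 by ring, cseq_one, hs0]; ring
        | succ t ih =>
          intro hlt
          have hlt' : 2*t + 1 < m := by omega
          have hc := ih hlt'
          have key : cseq s (2*t+3) = 4 - 2 * s (2*t+1) + 2 * s (2*t+2) := by
            rw [show 2*t+3 = (2*t+2)+1 by ring, cseq_succ, cseq_succ, hc,
                npow_odd (k := 2*t+1) (by omega), npow_even (k := 2*t+2) (by omega)]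
            ring
          have hlt'' : 2*t+3 < m := by omega
          have ha := hsub (2*t+3) hlt'' j2
          have hb := hsub (2*t+3) hlt'' j3
          rw [npow_odd (k := 2*t+3) (by omega), h2] at ha
          rw [npow_odd (k := 2*t+3) (by omega), h3] at hb
          have v1 := hval (2*t+1)
          have v2 := hval (2*t+2)
          rw [show 2*(t+1)+1 = 2*t+3 by ring]
          omega
      have hcodd : ∀ k, k % 2 = 1 → k < m → cseq s k = 4 := by
        intro k hk1 hkm
        obtain ⟨t, rfl⟩ : ∃ t, k = 2*t+1 := ⟨k/2, by omega⟩
        exact codd t hkm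
      have hpair : ∀ k, k % 2 = 1 → k + 1 < R → s (k+1) = s k := by
        intro k hk1 hkR
        have hkm : k < m := by omega
        have hck := hcodd k hk1 hkm
        have hck2 : cseq s (k+2) = 4 := by
          rcases Nat.lt_or_ge (k+2) m with h | h
          · exact hcodd _ (by omega) h
          · exfalso; omega
        rw [show k+2 = (k+1)+1 by ring, cseq_succ, cseq_succ, hck,
            npow_odd hk1, npow_even (k := k+1) (by omega)] at hck2
        omega
      have hslast : s (R-1) = 2 := by
        have hcm1 : cseq s (m-1) = 4 := hcodd (m-1) (by omega) (by omega)
        have hsm1 : s (m-1) = 2 := by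
          cases m with
          | zero => omega
          | succ mm =>
            have e : cseq s (mm+1) = cseq s mm + 2*(-1)^mm * s mm := cseq_succ s mm
            simp only [Nat.succ_sub_one] at hcm1
            rw [e, hcm1, npow_odd (k := mm) (by omega)] at hcm
            simp only [Nat.succ_sub_one]
            omega
        rw [period_to_mod hper (m-1), mod_pred (by omega) hRdvd hm0] at hsm1
        exact hsm1
      exact Or.inr (Or.inr ⟨hval, hs0, hslast, hpair, ⟨j3, h3⟩⟩)
    · -- case A12
      have hval : ∀ j, s j = 1 ∨ s j = 2 := by
        intro j
        have := hS j
        have h0' : s j ≠ 0 := fun h => hP0 ⟨j, h⟩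
        have h3' : s j ≠ 3 := fun h => hP3 ⟨j, h⟩
        omega
      obtain ⟨j1, h1⟩ : ∃ j, s j = 1 := by
        rcases h13 with h | ⟨j, h⟩
        · exact h
        · exact absurd ⟨j, h⟩ hP3
      have ceven : ∀ t, 2*t ≤ m → cseq s (2*t) = 0 := by
        intro t
        induction t with
        | zero => intro _; exact cseq_zero s
        | succ t ih =>
          intro hle
          have hc := ih (by omega)
          have key : cseq s (2*t+2) = 2 * s (2*t) - 2 * s (2*t+1) := by
            rw [show 2*t+2 = (2*t+1)+1 by ring, cseq_succ, cseq_succ, hc,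
                npow_even (k := 2*t) (by omega), npow_odd (k := 2*t+1) (by omega)]
            ring
          rw [show 2*(t+1) = 2*t+2 by ring]
          rcases Nat.lt_or_ge (2*t+2) m with h | h
          · have ha := hsub (2*t+2) h j1
            have hb := hsub (2*t+2) h j2
            rw [npow_even (k := 2*t+2) (by omega), h1] at ha
            rw [npow_even (k := 2*t+2) (by omega), h2] at hb
            have v1 := hval (2*t)
            have v2 := hval (2*t+1)
            omega
          · have : 2*t+2 = m := by omega
            rw [this]
            exact hcm
      have hpair : ∀ k, k % 2 = 0 → k + 1 < R → s (k+1) = s k := by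
        intro k hk0 hkR
        obtain ⟨t, rfl⟩ : ∃ t, k = 2*t := ⟨k/2, by omega⟩
        have hc1 := ceven t (by omega)
        have hc2 := ceven (t+1) (by omega)
        rw [show 2*(t+1) = (2*t+1)+1 by ring, cseq_succ, cseq_succ, hc1,
            npow_even (k := 2*t) (by omega), npow_odd (k := 2*t+1) (by omega)] at hc2
        omega
      exact Or.inr (Or.inl ⟨hval, hpair, ⟨j1, h1⟩, ⟨j2, h2⟩⟩)




lemma mod_parity {R k : ℕ} (hRe : Even R) : k % R % 2 = k % 2 := by
  rcases Nat.eq_zero_or_pos R with h0 | h0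
  · subst h0; simp
  · have h3 := Nat.div_add_mod k R
    have h4 : R * (k / R) % 2 = 0 := Nat.even_iff.mp (hRe.mul_right _)
    generalize R * (k / R) = A at *
    omega

lemma spair_odd {s : ℕ → ℤ} {R : ℕ} (hR2 : 2 ≤ R) (hRe : Even R)
    (hper : ∀ j, s (j + R) = s j) (hends : s (R-1) = s 0)
    (hpair : ∀ k, k % 2 = 1 → k + 1 < R → s (k+1) = s k) :
    ∀ k, k % 2 = 1 → s (k+1) = s k := by
  intro k hk
  have hR0 : 0 < R := by omega
  have hd : k % R < R := Nat.mod_lt _ hR0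
  have hd2 : k % R % 2 = 1 := by rw [mod_parity hRe]; exact hk
  have hsk : s k = s (k % R) := period_to_mod hper k
  have hsk1 : s (k+1) = s ((k+1) % R) := period_to_mod hper (k+1)
  rcases Nat.lt_or_ge (k % R) (R - 1) with hlt | hge
  · have hmod : (k+1) % R = k % R + 1 := by
      rw [Nat.add_mod, Nat.mod_eq_of_lt (show 1 < R by omega),
          Nat.mod_eq_of_lt (show k % R + 1 < R by omega)]
    rw [hsk, hsk1, hmod]
    exact hpair (k % R) hd2 (by omega)
  · have heq : k % R = R - 1 := by omega
    have hmod : (k+1) % R = 0 := by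
      rw [Nat.add_mod, Nat.mod_eq_of_lt (show 1 < R by omega), heq]
      simp [Nat.sub_add_cancel (show 1 ≤ R by omega)]
    rw [hsk, hsk1, hmod, heq, hends]

lemma spair_even {s : ℕ → ℤ} {R : ℕ} (hR2 : 2 ≤ R) (hRe : Even R)
    (hper : ∀ j, s (j + R) = s j)
    (hpair : ∀ k, k % 2 = 0 → k + 1 < R → s (k+1) = s k) :
    ∀ k, k % 2 = 0 → s (k+1) = s k := by
  intro k hk
  have hR0 : 0 < R := by omega
  have hd : k % R < R := Nat.mod_lt _ hR0
  have hd2 : k % R % 2 = 0 := by rw [mod_parity hRe]; exact hk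
  have hRo : (R - 1) % 2 = 1 := by
    have := Nat.even_iff.mp hRe
    omega
  have hlt : k % R < R - 1 := by
    rcases Nat.lt_or_ge (k % R) (R-1) with h | h
    · exact h
    · exfalso
      have : k % R = R - 1 := by omega
      omega
  have hmod : (k+1) % R = k % R + 1 := by
    rw [Nat.add_mod, Nat.mod_eq_of_lt (show 1 < R by omega),
        Nat.mod_eq_of_lt (show k % R + 1 < R by omega)]
  rw [period_to_mod hper k, period_to_mod hper (k+1), hmod]
  exact hpair (k % R) hd2 (by omega)

theorem backward01 (s : ℕ → ℤ) (m R : ℕ) (hR2 : 2 ≤ R) (hRe : Even R)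
    (hRm : R ≤ m) (hme : Even m) (hRdvd : R ∣ m)
    (hper : ∀ j, s (j + R) = s j)
    (hval : ∀ j, s j = 0 ∨ s j = 1) (hs0 : s 0 = 1) (hlast : s (R-1) = 1)
    (hpair : ∀ k, k % 2 = 1 → k + 1 < R → s (k+1) = s k)
    (hex : ∃ j, s j = 0) :
    cseq s m = 0 ∧
    (∀ k (j : ℕ), 0 ≤ cseq s k + (-1)^k * s j ∧ cseq s k + (-1)^k * s j ≤ 3) ∧
    (∀ v : ℤ, 0 ≤ v → v ≤ 3 → ∃ k, k < m ∧ ∃ j : ℕ, v = cseq s k + (-1)^k * s j) := by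
  have hm0 : 0 < m := by omega
  have hsp := spair_odd hR2 hRe hper (by rw [hlast, hs0]) hpair
  have codd : ∀ t, cseq s (2*t+1) = 2 := by
    intro t
    induction t with
    | zero => rw [show 2*0+1 = 1 by ring, cseq_one, hs0]; ring
    | succ t ih =>
      have hp := hsp (2*t+1) (by omega)
      rw [show 2*(t+1)+1 = (2*t+2)+1 by ring, cseq_succ,
          show 2*t+2 = (2*t+1)+1 by ring, cseq_succ, ih,
          npow_odd (k := 2*t+1) (by omega), npow_even (k := 2*t+2) (by omega), hp]
      ring
  have ceven : ∀ t, cseq s (2*t+2) = 2 - 2 * s (2*t+1) := by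
    intro t
    rw [show 2*t+2 = (2*t+1)+1 by ring, cseq_succ, codd t,
        npow_odd (k := 2*t+1) (by omega)]
    ring
  have hcm : cseq s m = 0 := by
    obtain ⟨t, rfl⟩ : ∃ t, m = 2*t+2 := ⟨(m-2)/2, by have := Nat.even_iff.mp hme; omega⟩
    rw [ceven t]
    have : s (2*t+1) = 1 := by
      have h1 : (2*t+1) = (2*t+2) - 1 := by omega
      rw [h1, period_to_mod hper, mod_pred (by omega) hRdvd (by omega), hlast]
    rw [this]; ring
  refine ⟨hcm, ?_, ?_⟩
  · intro k j
    have hv := hval j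
    rcases Nat.even_or_odd k with he | ho
    · rcases Nat.eq_zero_or_pos k with rfl | hk0
      · rw [cseq_zero]
        simp only [pow_zero, one_mul]
        omega
      · obtain ⟨t, rfl⟩ : ∃ t, k = 2*t+2 := ⟨(k-2)/2, by have := Nat.even_iff.mp he; omega⟩
        rw [ceven t, npow_even (k := 2*t+2) (by omega)]
        have := hval (2*t+1)
        omega
    · obtain ⟨t, rfl⟩ : ∃ t, k = 2*t+1 := ⟨k/2, by have := Nat.odd_iff.mp ho; omega⟩
      rw [codd t, npow_odd (k := 2*t+1) (by omega)]
      omega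
  · obtain ⟨j0, h0⟩ := hex
    intro v hv0 hv3
    -- find odd t < R-1 with s t = 0
    have hj0R : s (j0 % R) = 0 := by rw [← period_to_mod hper]; exact h0
    set u := j0 % R with hu
    have huR : u < R := Nat.mod_lt _ (by omega)
    have hu0 : u ≠ 0 := by intro h; rw [h, hs0] at hj0R; omega
    have huL : u ≠ R - 1 := by intro h; rw [h, hlast] at hj0R; omega
    obtain ⟨t, ht1, htR, hts⟩ : ∃ t, t % 2 = 1 ∧ t + 1 < R ∧ s t = 0 := by
      rcases Nat.even_or_odd u with he | ho
      · refine ⟨u - 1, ?_, ?_, ?_⟩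
        · have := Nat.even_iff.mp he; omega
        · omega
        · have := hpair (u-1) (by have := Nat.even_iff.mp he; omega) (by omega)
          rw [show u - 1 + 1 = u by omega] at this
          rw [← this]; exact hj0R
      · exact ⟨u, by have := Nat.odd_iff.mp ho; omega, by omega, hj0R⟩
    obtain ⟨w, rfl⟩ : ∃ w, t = 2*w+1 := ⟨t/2, by omega⟩
    interval_cases v
    · exact ⟨0, hm0, j0, by rw [cseq_zero, pow_zero, h0]; ring⟩
    · exact ⟨0, hm0, 0, by rw [cseq_zero, pow_zero, hs0]; ring⟩
    · exact ⟨1, by omega, j0, by rw [cseq_one, hs0, pow_one, h0]; ring⟩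
    · refine ⟨2*w+2, by omega, 0, ?_⟩
      rw [ceven w, hts, npow_even (k := 2*w+2) (by omega), hs0]
      ring

theorem backward12 (s : ℕ → ℤ) (m R : ℕ) (hR2 : 2 ≤ R) (hRe : Even R)
    (hRm : R ≤ m) (hme : Even m) (hRdvd : R ∣ m)
    (hper : ∀ j, s (j + R) = s j)
    (hval : ∀ j, s j = 1 ∨ s j = 2)
    (hpair : ∀ k, k % 2 = 0 → k + 1 < R → s (k+1) = s k)
    (hex1 : ∃ j, s j = 1) (hex2 : ∃ j, s j = 2) :
    cseq s m = 0 ∧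
    (∀ k (j : ℕ), 0 ≤ cseq s k + (-1)^k * s j ∧ cseq s k + (-1)^k * s j ≤ 3) ∧
    (∀ v : ℤ, 0 ≤ v → v ≤ 3 → ∃ k, k < m ∧ ∃ j : ℕ, v = cseq s k + (-1)^k * s j) := by
  have hm0 : 0 < m := by omega
  have hsp := spair_even hR2 hRe hper hpair
  have ceven : ∀ t, cseq s (2*t) = 0 := by
    intro t
    induction t with
    | zero => exact cseq_zero s
    | succ t ih =>
      have hp := hsp (2*t) (by omega)
      rw [show 2*(t+1) = (2*t+1)+1 by ring, cseq_succ, cseq_succ, ih,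
          npow_even (k := 2*t) (by omega), npow_odd (k := 2*t+1) (by omega), hp]
      ring
  have codd : ∀ t, cseq s (2*t+1) = 2 * s (2*t) := by
    intro t
    rw [cseq_succ, ceven t, npow_even (k := 2*t) (by omega)]
    ring
  have hcm : cseq s m = 0 := by
    obtain ⟨t, rfl⟩ : ∃ t, m = 2*t := ⟨m/2, by have := Nat.even_iff.mp hme; omega⟩
    exact ceven t
  refine ⟨hcm, ?_, ?_⟩
  · intro k j
    have hv := hval j
    rcases Nat.even_or_odd k with he | ho
    · obtain ⟨t, rfl⟩ : ∃ t, k = 2*t := ⟨k/2, by have := Nat.even_iff.mp he; omega⟩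
      rw [ceven t, npow_even (k := 2*t) (by omega)]
      omega
    · obtain ⟨t, rfl⟩ : ∃ t, k = 2*t+1 := ⟨k/2, by have := Nat.odd_iff.mp ho; omega⟩
      rw [codd t, npow_odd (k := 2*t+1) (by omega)]
      have := hval (2*t)
      omega
  · intro v hv0 hv3
    obtain ⟨j1, h1⟩ := hex1
    obtain ⟨j2, h2⟩ := hex2
    -- even index with value 1, even index with value 2
    have hfind : ∀ j : ℕ, ∃ t, t % 2 = 0 ∧ t < R - 1 ∧ s t = s j := by
      intro j
      have hjR : s (j % R) = s j := (period_to_mod hper j).symm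
      set u := j % R with hu
      have huR : u < R := Nat.mod_lt _ (by omega)
      have hRo : (R - 1) % 2 = 1 := by have := Nat.even_iff.mp hRe; omega
      rcases Nat.even_or_odd u with he | ho
      · exact ⟨u, by have := Nat.even_iff.mp he; omega, by have := Nat.even_iff.mp he; omega, hjR⟩
      · have hou := Nat.odd_iff.mp ho
        refine ⟨u - 1, by omega, by omega, ?_⟩
        have := hpair (u-1) (by omega) (by omega)
        rw [show u - 1 + 1 = u by omega] at this
        rw [← this]; exact hjR
    obtain ⟨t1, ht1e, ht1R, ht1s⟩ := hfind j1
    obtain ⟨t2, ht2e, ht2R, ht2s⟩ := hfind j2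
    obtain ⟨w1, rfl⟩ : ∃ w, t1 = 2*w := ⟨t1/2, by omega⟩
    obtain ⟨w2, rfl⟩ : ∃ w, t2 = 2*w := ⟨t2/2, by omega⟩
    rw [h1] at ht1s
    rw [h2] at ht2s
    interval_cases v
    · refine ⟨2*w1+1, by omega, j2, ?_⟩
      rw [codd w1, ht1s, npow_odd (k := 2*w1+1) (by omega), h2]
      ring
    · exact ⟨0, hm0, j1, by rw [cseq_zero, pow_zero, h1]; ring⟩
    · exact ⟨0, hm0, j2, by rw [cseq_zero, pow_zero, h2]; ring⟩
    · refine ⟨2*w2+1, by omega, j1, ?_⟩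
      rw [codd w2, ht2s, npow_odd (k := 2*w2+1) (by omega), h1]
      ring

theorem backward23 (s : ℕ → ℤ) (m R : ℕ) (hR2 : 2 ≤ R) (hRe : Even R)
    (hRm : R ≤ m) (hme : Even m) (hRdvd : R ∣ m)
    (hper : ∀ j, s (j + R) = s j)
    (hval : ∀ j, s j = 2 ∨ s j = 3) (hs0 : s 0 = 2) (hlast : s (R-1) = 2)
    (hpair : ∀ k, k % 2 = 1 → k + 1 < R → s (k+1) = s k)
    (hex : ∃ j, s j = 3) :
    cseq s m = 0 ∧
    (∀ k (j : ℕ), 0 ≤ cseq s k + (-1)^k * s j ∧ cseq s k + (-1)^k * s j ≤ 3) ∧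
    (∀ v : ℤ, 0 ≤ v → v ≤ 3 → ∃ k, k < m ∧ ∃ j : ℕ, v = cseq s k + (-1)^k * s j) := by
  have hm0 : 0 < m := by omega
  have hsp := spair_odd hR2 hRe hper (by rw [hlast, hs0]) hpair
  have codd : ∀ t, cseq s (2*t+1) = 4 := by
    intro t
    induction t with
    | zero => rw [show 2*0+1 = 1 by ring, cseq_one, hs0]; ring
    | succ t ih =>
      have hp := hsp (2*t+1) (by omega)
      rw [show 2*(t+1)+1 = (2*t+2)+1 by ring, cseq_succ,
          show 2*t+2 = (2*t+1)+1 by ring, cseq_succ, ih,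
          npow_odd (k := 2*t+1) (by omega), npow_even (k := 2*t+2) (by omega), hp]
      ring
  have ceven : ∀ t, cseq s (2*t+2) = 4 - 2 * s (2*t+1) := by
    intro t
    rw [show 2*t+2 = (2*t+1)+1 by ring, cseq_succ, codd t,
        npow_odd (k := 2*t+1) (by omega)]
    ring
  have hcm : cseq s m = 0 := by
    obtain ⟨t, rfl⟩ : ∃ t, m = 2*t+2 := ⟨(m-2)/2, by have := Nat.even_iff.mp hme; omega⟩
    rw [ceven t]
    have : s (2*t+1) = 2 := by
      have h1 : (2*t+1) = (2*t+2) - 1 := by omega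
      rw [h1, period_to_mod hper, mod_pred (by omega) hRdvd (by omega), hlast]
    rw [this]; ring
  refine ⟨hcm, ?_, ?_⟩
  · intro k j
    have hv := hval j
    rcases Nat.even_or_odd k with he | ho
    · rcases Nat.eq_zero_or_pos k with rfl | hk0
      · rw [cseq_zero]
        simp only [pow_zero, one_mul]
        omega
      · obtain ⟨t, rfl⟩ : ∃ t, k = 2*t+2 := ⟨(k-2)/2, by have := Nat.even_iff.mp he; omega⟩
        rw [ceven t, npow_even (k := 2*t+2) (by omega)]
        have := hval (2*t+1)
        omega
    · obtain ⟨t, rfl⟩ : ∃ t, k = 2*t+1 := ⟨k/2, by have := Nat.odd_iff.mp ho; omega⟩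
      rw [codd t, npow_odd (k := 2*t+1) (by omega)]
      omega
  · obtain ⟨j3, h3⟩ := hex
    intro v hv0 hv3
    have hj3R : s (j3 % R) = 3 := by rw [← period_to_mod hper]; exact h3
    set u := j3 % R with hu
    have huR : u < R := Nat.mod_lt _ (by omega)
    have hu0 : u ≠ 0 := by intro h; rw [h, hs0] at hj3R; omega
    have huL : u ≠ R - 1 := by intro h; rw [h, hlast] at hj3R; omega
    obtain ⟨t, ht1, htR, hts⟩ : ∃ t, t % 2 = 1 ∧ t + 1 < R ∧ s t = 3 := by
      rcases Nat.even_or_odd u with he | ho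
      · refine ⟨u - 1, by have := Nat.even_iff.mp he; omega, by omega, ?_⟩
        have := hpair (u-1) (by have := Nat.even_iff.mp he; omega) (by omega)
        rw [show u - 1 + 1 = u by omega] at this
        rw [← this]; exact hj3R
      · exact ⟨u, by have := Nat.odd_iff.mp ho; omega, by omega, hj3R⟩
    obtain ⟨w, rfl⟩ : ∃ w, t = 2*w+1 := ⟨t/2, by omega⟩
    interval_cases v
    · refine ⟨2*w+2, by omega, 0, ?_⟩
      rw [ceven w, hts, npow_even (k := 2*w+2) (by omega), hs0]
      ring
    · exact ⟨1, by omega, j3, by rw [cseq_one, hs0, pow_one, h3]; ring⟩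
    · exact ⟨0, hm0, 0, by rw [cseq_zero, pow_zero, hs0]; ring⟩
    · exact ⟨0, hm0, j3, by rw [cseq_zero, pow_zero, h3]; ring⟩


end Stmt8Aux
theorem stmt_8 (p q r : ℤ) (hp : p ≠ 0) (hgcd : Int.gcd p q = 1)
    (hq1 : 1 ≤ q) (hqp : q ≤ |p|) (hr2 : 2 ≤ r) (hre : Even r)
    (Q R m : ℕ) (hQ : (Q : ℤ) = q) (hR : (R : ℤ) = r) (hm : (m : ℤ) = |p| * r) :
    {x : Fin (Q * R) → ℤ | (twist (Q * R))^[m] x = x ∧ colors (Q * R) m x = {0, 1, 2, 3}}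
      = {x : Fin (Q * R) → ℤ |
            ∃ a ∈ A01 R ∪ A12 R ∪ A23 R, ∀ (j : Fin Q) (i : Fin R), blk Q R x j i = a i}
        \ {fun _ => 1, fun _ => 2} := by
  open Stmt8Aux in
  -- numeric facts
  have hR2' : 2 ≤ R := by exact_mod_cast hR ▸ hr2
  have hQ1' : 0 < Q := by have : (1:ℤ) ≤ (Q:ℤ) := hQ ▸ hq1; exact_mod_cast this
  have hRe' : Even R := by
    rw [← Int.even_coe_nat]
    rw [hR]; exact hre
  have hP1' : 0 < p.natAbs := Int.natAbs_pos.mpr hp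
  have hmPR : m = p.natAbs * R := by
    have h1 : (m:ℤ) = (p.natAbs : ℤ) * (R:ℤ) := by
      rw [hm, hR, Int.abs_eq_natAbs]
    exact_mod_cast h1
  have hco : Nat.Coprime p.natAbs Q := by
    have hqQ : q.natAbs = Q := by rw [← hQ, Int.natAbs_natCast]
    unfold Nat.Coprime
    rw [← hqQ]
    exact hgcd
  have hRm' : R ≤ m := by rw [hmPR]; exact Nat.le_mul_of_pos_left R hP1'
  have hme' : Even m := by rw [hmPR]; exact hRe'.mul_left _
  have hRdvd' : R ∣ m := by rw [hmPR]; exact dvd_mul_left R _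
  have hn : 0 < Q * R := Nat.mul_pos hQ1' (by omega)
  have hR0 : 0 < R := by omega
  ext x
  simp only [Set.mem_setOf_eq, Set.mem_diff, Set.mem_insert_iff, Set.mem_singleton_iff]
  constructor
  · rintro ⟨hfix, hcol⟩
    -- forward direction
    have hfp0 : ∀ i : Fin (Q*R),
        cseq (seqOf x) m + seqOf x ((i:ℕ) + m) = seqOf x (i:ℕ) := by
      intro i
      have h1 := twist_iter hn x m i
      rw [hfix, hme'.neg_one_pow, one_mul] at h1
      have h2 : seqOf x (i:ℕ) = x i := by
        rw [seqOf_lt x _ i.2]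
      rw [h2, ← h1]
    have hfp : ∀ j : ℕ, cseq (seqOf x) m + seqOf x (j + m) = seqOf x j := by
      intro j
      have h1 := hfp0 ⟨j % (Q*R), Nat.mod_lt _ hn⟩
      have e1 : seqOf x (j % (Q*R) + m) = seqOf x (j + m) := by
        rw [← seqOf_mod hn x (j % (Q*R) + m), Nat.mod_add_mod, seqOf_mod hn x (j + m)]
      have e2 : seqOf x (j % (Q*R)) = seqOf x j := seqOf_mod hn x j
      rw [show ((⟨j % (Q*R), Nat.mod_lt _ hn⟩ : Fin (Q*R)) : ℕ) = j % (Q*R) from rfl] at h1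
      rw [e1, e2] at h1
      exact h1
    have hcm : cseq (seqOf x) m = 0 := by
      have hit : ∀ (t : ℕ) (j : ℕ),
          seqOf x (j + t * m) = seqOf x j - (t:ℤ) * cseq (seqOf x) m := by
        intro t
        induction t with
        | zero => intro j; simp
        | succ t ih =>
          intro j
          have he : j + (t+1)*m = (j + m) + t*m := by ring
          rw [he, ih (j + m)]
          have := hfp j
          push_cast
          linarith
      have h1 := hit (Q*R) 0
      have h2 : seqOf x (0 + (Q*R) * m) = seqOf x 0 := by
        rw [show (Q*R)*m = m*(Q*R) by ring]
        exact period_mul (seqOf_add_n hn x) m 0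
      rw [h2] at h1
      have h4 : ((Q*R : ℕ) : ℤ) ≠ 0 := Nat.cast_ne_zero.mpr (by omega)
      have h3 : ((Q*R : ℕ) : ℤ) * cseq (seqOf x) m = 0 := by linarith
      exact (mul_eq_zero.mp h3).resolve_left h4
    have hpm : ∀ j, seqOf x (j + m) = seqOf x j := by
      intro j
      have := hfp j
      rw [hcm] at this
      linarith
    have hper : ∀ j, seqOf x (j + R) = seqOf x j := by
      apply period_gcd hpm (seqOf_add_n hn x)
      obtain ⟨k, l, hkl⟩ := exists_combo hP1' hQ1' hco
      refine ⟨k, l, ?_⟩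
      rw [hmPR]
      calc k * (p.natAbs * R) = (k * p.natAbs) * R := by ring
        _ = (1 + l * Q) * R := by rw [hkl]
        _ = R + l * (Q * R) := by ring
    have hcc : {c | ∃ k, k < m ∧ ∃ j : ℕ, c = cseq (seqOf x) k + (-1)^k * seqOf x j}
        = ({0,1,2,3} : Set ℤ) := by
      rw [← colors_char hn m x]
      exact hcol
    have hsub : ∀ k, k < m → ∀ j : ℕ,
        0 ≤ cseq (seqOf x) k + (-1)^k * seqOf x j
        ∧ cseq (seqOf x) k + (-1)^k * seqOf x j ≤ 3 := by
      intro k hk j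
      have hmem : cseq (seqOf x) k + (-1)^k * seqOf x j ∈ ({0,1,2,3} : Set ℤ) := by
        rw [← hcc]
        exact ⟨k, hk, j, rfl⟩
      simp only [Set.mem_insert_iff, Set.mem_singleton_iff] at hmem
      omega
    have hcov : ∀ v : ℤ, 0 ≤ v → v ≤ 3 →
        ∃ k, k < m ∧ ∃ j : ℕ, v = cseq (seqOf x) k + (-1)^k * seqOf x j := by
      intro v h0 h3
      have hv : v ∈ ({0,1,2,3} : Set ℤ) := by
        simp only [Set.mem_insert_iff, Set.mem_singleton_iff]
        omega
      rw [← hcc] at hv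
      exact hv
    have core := forward_core (seqOf x) m R hR2' hRe' hRm' hme' hRdvd' hper hcm hsub hcov
    have hblk : ∀ (j : Fin Q) (i : Fin R),
        blk Q R x j i = seqOf x (i : ℕ) := by
      intro j i
      have hb : (j:ℕ)*R + (i:ℕ) < Q*R := by
        calc (j : ℕ) * R + (i : ℕ) < (j : ℕ) * R + R := Nat.add_lt_add_left i.2 _
          _ = ((j : ℕ) + 1) * R := (Nat.succ_mul _ _).symm
          _ ≤ Q * R := Nat.mul_le_mul_right R j.2
      have h1 : blk Q R x j i = seqOf x ((j:ℕ)*R + (i:ℕ)) := (seqOf_lt x _ hb).symm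
      rw [h1, show (j:ℕ)*R + (i:ℕ) = (i:ℕ) + (j:ℕ)*R by omega]
      exact period_mul hper (j:ℕ) (i:ℕ)
    rcases core with ⟨hval, hs0, hlast, hpair, ⟨j0, hj0⟩⟩ |
        ⟨hval, hpair, ⟨j1, hj1⟩, ⟨j2, hj2⟩⟩ |
        ⟨hval, hs0, hlast, hpair, ⟨j3, hj3⟩⟩
    · refine ⟨⟨fun i => seqOf x (i:ℕ), ?_, fun j i => hblk j i⟩, ?_⟩
      · apply Set.mem_union_left
        apply Set.mem_union_left
        refine ⟨fun i => hval _, ?_, fun k hk h => hpair _ hk h⟩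
        intro i hi
        rcases hi with h0 | hL
        · show seqOf x (i:ℕ) = 1
          rw [h0]; exact hs0
        · show seqOf x (i:ℕ) = 1
          rw [hL]; exact hlast
      · rintro (rfl | rfl)
        · rw [seqOf_eq hn] at hj0; simp at hj0
        · rw [seqOf_eq hn] at hs0; simp at hs0
    · refine ⟨⟨fun i => seqOf x (i:ℕ), ?_, fun j i => hblk j i⟩, ?_⟩
      · apply Set.mem_union_left
        apply Set.mem_union_right
        exact ⟨fun i => hval _, fun k hk h => hpair _ hk h⟩
      · rintro (rfl | rfl)
        · rw [seqOf_eq hn] at hj2; simp at hj2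
        · rw [seqOf_eq hn] at hj1; simp at hj1
    · refine ⟨⟨fun i => seqOf x (i:ℕ), ?_, fun j i => hblk j i⟩, ?_⟩
      · apply Set.mem_union_right
        refine ⟨fun i => hval _, ?_, fun k hk h => hpair _ hk h⟩
        intro i hi
        rcases hi with h0 | hL
        · show seqOf x (i:ℕ) = 2
          rw [h0]; exact hs0
        · show seqOf x (i:ℕ) = 2
          rw [hL]; exact hlast
      · rintro (rfl | rfl)
        · rw [seqOf_eq hn] at hs0; simp at hs0
        · rw [seqOf_eq hn] at hj3; simp at hj3
  · rintro ⟨⟨a, hmem, hblk⟩, hne⟩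
    have hsa : ∀ t : ℕ, seqOf x t = a ⟨t % R, Nat.mod_lt _ hR0⟩ := by
      intro t
      rw [seqOf_eq hn]
      have huR : t % (Q*R) < Q*R := Nat.mod_lt _ hn
      have hdiv : t % (Q*R) / R < Q := by
        rw [Nat.div_lt_iff_lt_mul hR0]
        exact huR
      have hb := hblk ⟨t % (Q*R) / R, hdiv⟩ ⟨t % (Q*R) % R, Nat.mod_lt _ hR0⟩
      have hidx : t % (Q*R) / R * R + t % (Q*R) % R = t % (Q*R) := by
        rw [Nat.mul_comm]
        exact Nat.div_add_mod _ R
      have hmm : t % (Q*R) % R = t % R := Nat.mod_mod_of_dvd t (dvd_mul_left R Q)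
      unfold blk at hb
      calc x ⟨t % (Q*R), huR⟩
          = x ⟨t % (Q*R) / R * R + t % (Q*R) % R, by omega⟩ := by
            exact congrArg x (Fin.ext hidx.symm)
        _ = a ⟨t % (Q*R) % R, Nat.mod_lt _ hR0⟩ := hb
        _ = a ⟨t % R, Nat.mod_lt _ hR0⟩ := congrArg a (Fin.ext hmm)
    have hper : ∀ j, seqOf x (j + R) = seqOf x j := by
      intro j
      rw [hsa, hsa]
      exact congrArg a (Fin.ext (Nat.add_mod_right j R))
    have hslt : ∀ (i : ℕ) (h : i < R), seqOf x i = a ⟨i, h⟩ := by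
      intro i h
      rw [hsa]
      exact congrArg a (Fin.ext (Nat.mod_eq_of_lt h))
    have hxconst : ∀ v : ℤ, (∀ i, a i = v) → x = fun _ => v := by
      intro v hv
      funext i
      have h1 : x i = seqOf x (i:ℕ) := by
        rw [seqOf_lt x _ i.2]
      rw [h1, hsa]
      exact hv _
    have key : cseq (seqOf x) m = 0 ∧
        (∀ k (j : ℕ), 0 ≤ cseq (seqOf x) k + (-1)^k * seqOf x j
          ∧ cseq (seqOf x) k + (-1)^k * seqOf x j ≤ 3) ∧
        (∀ v : ℤ, 0 ≤ v → v ≤ 3 →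
          ∃ k, k < m ∧ ∃ j : ℕ, v = cseq (seqOf x) k + (-1)^k * seqOf x j) := by
      have hne1 : ¬ (∀ i, a i = 1) := fun h => hne (Or.inl (hxconst 1 h))
      have hne2 : ¬ (∀ i, a i = 2) := fun h => hne (Or.inr (hxconst 2 h))
      rcases hmem with (h01 | h12) | h23
      · obtain ⟨hv, hends, hp⟩ := h01
        have hval : ∀ j, seqOf x j = 0 ∨ seqOf x j = 1 := fun j => by rw [hsa]; exact hv _
        have hs0 : seqOf x 0 = 1 := by
          rw [hsa]; exact hends _ (Or.inl (Nat.zero_mod R))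
        have hlast : seqOf x (R-1) = 1 := by
          rw [hsa]; exact hends _ (Or.inr (Nat.mod_eq_of_lt (by omega)))
        have hpairN : ∀ k, k % 2 = 1 → k + 1 < R → seqOf x (k+1) = seqOf x k := by
          intro k hk hkR
          rw [hslt _ hkR, hslt _ (by omega : k < R)]
          exact hp ⟨k, by omega⟩ hk hkR
        have hex : ∃ j, seqOf x j = 0 := by
          by_contra h
          push_neg at h
          apply hne1
          intro i
          have h1 := hv i
          have h2 := h (i : ℕ)
          rw [hslt _ i.2] at h2
          rw [show (⟨(i:ℕ), i.2⟩ : Fin R) = i from Fin.ext rfl] at h2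
          omega
        exact backward01 (seqOf x) m R hR2' hRe' hRm' hme' hRdvd' hper hval hs0 hlast hpairN hex
      · obtain ⟨hv, hp⟩ := h12
        have hval : ∀ j, seqOf x j = 1 ∨ seqOf x j = 2 := fun j => by rw [hsa]; exact hv _
        have hpairN : ∀ k, k % 2 = 0 → k + 1 < R → seqOf x (k+1) = seqOf x k := by
          intro k hk hkR
          rw [hslt _ hkR, hslt _ (by omega : k < R)]
          exact hp ⟨k, by omega⟩ hk hkR
        have hex2 : ∃ j, seqOf x j = 2 := by
          by_contra h
          push_neg at h
          apply hne1
          intro i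
          have h1 := hv i
          have h2 := h (i : ℕ)
          rw [hslt _ i.2] at h2
          rw [show (⟨(i:ℕ), i.2⟩ : Fin R) = i from Fin.ext rfl] at h2
          omega
        have hex1 : ∃ j, seqOf x j = 1 := by
          by_contra h
          push_neg at h
          apply hne2
          intro i
          have h1 := hv i
          have h2 := h (i : ℕ)
          rw [hslt _ i.2] at h2
          rw [show (⟨(i:ℕ), i.2⟩ : Fin R) = i from Fin.ext rfl] at h2
          omega
        exact backward12 (seqOf x) m R hR2' hRe' hRm' hme' hRdvd' hper hval hpairN hex1 hex2
      · obtain ⟨hv, hends, hp⟩ := h23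
        have hval : ∀ j, seqOf x j = 2 ∨ seqOf x j = 3 := fun j => by rw [hsa]; exact hv _
        have hs0 : seqOf x 0 = 2 := by
          rw [hsa]; exact hends _ (Or.inl (Nat.zero_mod R))
        have hlast : seqOf x (R-1) = 2 := by
          rw [hsa]; exact hends _ (Or.inr (Nat.mod_eq_of_lt (by omega)))
        have hpairN : ∀ k, k % 2 = 1 → k + 1 < R → seqOf x (k+1) = seqOf x k := by
          intro k hk hkR
          rw [hslt _ hkR, hslt _ (by omega : k < R)]
          exact hp ⟨k, by omega⟩ hk hkR
        have hex : ∃ j, seqOf x j = 3 := by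
          by_contra h
          push_neg at h
          apply hne2
          intro i
          have h1 := hv i
          have h2 := h (i : ℕ)
          rw [hslt _ i.2] at h2
          rw [show (⟨(i:ℕ), i.2⟩ : Fin R) = i from Fin.ext rfl] at h2
          omega
        exact backward23 (seqOf x) m R hR2' hRe' hRm' hme' hRdvd' hper hval hs0 hlast hpairN hex
    obtain ⟨hcm0, hcont, hcovr⟩ := key
    constructor
    · funext i
      rw [twist_iter hn x m i, hcm0, hme'.neg_one_pow, one_mul]
      obtain ⟨e, he⟩ := hRdvd'
      have h1 : seqOf x ((i:ℕ) + m) = seqOf x (i:ℕ) := by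
        rw [he, show R*e = e*R from Nat.mul_comm R e]
        exact period_mul hper e _
      rw [h1, seqOf_lt x _ i.2]
      simp
    · rw [colors_char hn m x]
      ext c
      simp only [Set.mem_setOf_eq, Set.mem_insert_iff, Set.mem_singleton_iff]
      constructor
      · rintro ⟨k, hk, j, rfl⟩
        have := hcont k j
        omega
      · intro hc
        exact hcovr c (by omega) (by omega)
end

section
/- Let r ≥ 2 be an even integer and q ≥ 1 an integer, and let A′ ⊆ ℤ^{qr} be the set of concatenations (a, a, …, a) of q copies of some a ∈ A01 ∪ A12 ∪ A23, with the two constant vectors (1,1,…,1) and (2,2,…,2) removed. Then for every x = (x_1, …, x_{qr}) ∈ A′, the vector (2x_1 − x_2, 2x_1 − x_3, …, 2x_1 − x_{qr}, x_1) (that is, the image T_{qr}(x) of x under one twist) also belongs to A′. -/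
/-- `A′ ⊆ ℤ^{QR}`: concatenations of `Q` copies of some `a ∈ A01 ∪ A12 ∪ A23`,
with the constant vectors `(1,…,1)` and `(2,…,2)` removed. -/
def Aprime (Q R : ℕ) : Set (Fin (Q * R) → ℤ) :=
  {x | ∃ a ∈ A01 R ∪ A12 R ∪ A23 R, ∀ (j : Fin Q) (i : Fin R), blk Q R x j i = a i}
    \ {fun _ => 1, fun _ => 2}

def twb (R : ℕ) (hR0 : 0 < R) (a : Fin R → ℤ) : Fin R → ℤ :=
  fun i => 2 * a ⟨0, hR0⟩ - a ⟨((i : ℕ) + 1) % R, Nat.mod_lt _ hR0⟩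

lemma twb_lt {R : ℕ} (hR0 : 0 < R) (a : Fin R → ℤ) (k : ℕ) (hk : k < R) (h : k + 1 < R) :
    twb R hR0 a ⟨k, hk⟩ = 2 * a ⟨0, hR0⟩ - a ⟨k + 1, h⟩ := by
  simp only [twb, Nat.mod_eq_of_lt h]

lemma twb_last {R : ℕ} (hR0 : 0 < R) (a : Fin R → ℤ) (k : ℕ) (hk : k < R) (h : k + 1 = R) :
    twb R hR0 a ⟨k, hk⟩ = a ⟨0, hR0⟩ := by
  simp only [twb, h, Nat.mod_self]
  ring

theorem stmt_10 (Q R : ℕ) (hQ : 1 ≤ Q) (hR2 : 2 ≤ R) (hRe : Even R) :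
    ∀ x ∈ Aprime Q R, twist (Q * R) x ∈ Aprime Q R := by
  obtain ⟨m, hm⟩ := hRe
  rintro x ⟨⟨a, ha, hblk⟩, hne⟩
  have hR0 : 0 < R := by omega
  have hQR : 0 < Q * R := Nat.mul_pos hQ hR0
  -- periodicity of x
  have hper : ∀ (k : ℕ) (hk : k < Q * R), x ⟨k, hk⟩ = a ⟨k % R, Nat.mod_lt _ hR0⟩ := by
    intro k hk
    have hj : k / R < Q := Nat.div_lt_of_lt_mul (by rwa [Nat.mul_comm] at hk)
    have h := hblk ⟨k / R, hj⟩ ⟨k % R, Nat.mod_lt _ hR0⟩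
    simp only [blk] at h
    convert h using 3
    rw [Nat.mul_comm]; exact (Nat.div_add_mod k R).symm
  -- blocks of the twist
  have htw : ∀ (j : Fin Q) (i : Fin R), blk Q R (twist (Q * R) x) j i = twb R hR0 a i := by
    rintro ⟨j, hj⟩ ⟨i, hi⟩
    have hjR : j * R + R ≤ Q * R := by
      have := Nat.mul_le_mul_right R hj
      rwa [Nat.succ_mul] at this
    simp only [blk, twist]
    by_cases h : j * R + i + 1 < Q * R
    · rw [dif_pos h, hper 0, hper _ h]
      have hmod : (j * R + i + 1) % R = (i + 1) % R := by
        rw [Nat.add_assoc, Nat.mul_comm j R]; exact Nat.mul_add_mod _ _ _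
      simp only [hmod, Nat.zero_mod, twb]
    · have hiR : i + 1 = R := by omega
      rw [dif_neg h, hper 0, twb_last hR0 a i hi hiR]
      simp
  -- constant vectors are preserved backwards
  have hconst : ∀ c : ℤ, twist (Q * R) x = (fun _ => c) → x = fun _ => c := by
    intro c hc
    have hbc : ∀ i : Fin R, twb R hR0 a i = c := by
      intro i
      have h := htw ⟨0, hQ⟩ i
      rw [hc] at h
      simpa [blk] using h.symm
    have ha0c : a ⟨0, hR0⟩ = c := by
      have h := hbc ⟨R - 1, by omega⟩
      rwa [twb_last hR0 a _ (by omega) (by omega)] at h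
    have haall : ∀ i : Fin R, a i = c := by
      rintro ⟨i, hi⟩
      rcases Nat.eq_zero_or_pos i with h0 | hpos
      · subst h0; exact ha0c
      · have h1 : i - 1 + 1 < R := by omega
        have h := hbc ⟨i - 1, by omega⟩
        rw [twb_lt hR0 a _ (by omega) h1, ha0c] at h
        have hii : (⟨i - 1 + 1, h1⟩ : Fin R) = ⟨i, hi⟩ := Fin.ext (show i - 1 + 1 = i by omega)
        rw [hii] at h
        omega
    funext k
    exact (hper k k.2).trans (haall _)
  constructor
  · -- the twist is a concatenation of copies of twb
    refine ⟨twb R hR0 a, ?_, htw⟩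
    rcases ha with (h | h) | h
    · -- a ∈ A01 : twist block lies in A12
      obtain ⟨ha1, ha2, ha3⟩ := h
      have ha0 : a ⟨0, hR0⟩ = 1 := ha2 ⟨0, hR0⟩ (Or.inl rfl)
      refine Or.inl (Or.inr ⟨?_, ?_⟩)
      · rintro ⟨i, hi⟩
        rcases Nat.lt_or_ge (i + 1) R with h' | h'
        · rw [twb_lt hR0 a i hi h']
          have hv := ha1 ⟨i + 1, h'⟩
          omega
        · rw [twb_last hR0 a i hi (by omega)]
          omega
      · rintro ⟨k, hk⟩ hk2 h
        simp only at hk2 h ⊢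
        rcases Nat.lt_or_ge (k + 2) R with h2 | h2
        · rw [twb_lt hR0 a (k + 1) h (by omega), twb_lt hR0 a k hk h]
          have := ha3 ⟨k + 1, h⟩ (by simpa using by omega) (by simpa using by omega)
          simp only at this
          rw [this]
        · have hk1R : k + 2 = R := by omega
          rw [twb_last hR0 a (k + 1) h (by omega), twb_lt hR0 a k hk h]
          have hlast : a ⟨k + 1, h⟩ = 1 := ha2 ⟨k + 1, h⟩ (Or.inr (show k + 1 = R - 1 by omega))
          omega
    · -- a ∈ A12
      obtain ⟨ha1, ha2⟩ := h
      have ha01 : a ⟨1, by omega⟩ = a ⟨0, hR0⟩ := ha2 ⟨0, hR0⟩ rfl (show 0 + 1 < R by omega)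
      have hpair : ∀ (k : ℕ) (hk : k < R), k % 2 = 1 → ∀ h : k + 1 < R,
          twb R hR0 a ⟨k + 1, h⟩ = twb R hR0 a ⟨k, hk⟩ := by
        intro k hk hk2 h
        have h2 : k + 2 < R := by omega
        rw [twb_lt hR0 a (k + 1) h h2, twb_lt hR0 a k hk h]
        have := ha2 ⟨k + 1, h⟩ (by simpa using by omega) (by simpa using by omega)
        simp only at this
        rw [this]
      have hends : ∀ (i : ℕ) (hi : i < R), i = 0 ∨ i = R - 1 →
          twb R hR0 a ⟨i, hi⟩ = a ⟨0, hR0⟩ := by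
        rintro i hi (rfl | hi')
        · rw [twb_lt hR0 a 0 hi (by omega), ha01]; ring
        · rw [twb_last hR0 a i hi (by omega)]
      rcases ha1 ⟨0, hR0⟩ with ha0 | ha0
      · -- a₀ = 1 : twist block lies in A01
        refine Or.inl (Or.inl ⟨?_, ?_, ?_⟩)
        · rintro ⟨i, hi⟩
          rcases Nat.lt_or_ge (i + 1) R with h' | h'
          · rw [twb_lt hR0 a i hi h']
            have hv := ha1 ⟨i + 1, h'⟩
            omega
          · rw [twb_last hR0 a i hi (by omega)]
            omega
        · rintro ⟨i, hi⟩ hi'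
          simp only at hi'
          rw [hends i hi hi', ha0]
        · rintro ⟨k, hk⟩ hk2 h
          exact hpair k hk hk2 h
      · -- a₀ = 2 : twist block lies in A23
        refine Or.inr ⟨?_, ?_, ?_⟩
        · rintro ⟨i, hi⟩
          rcases Nat.lt_or_ge (i + 1) R with h' | h'
          · rw [twb_lt hR0 a i hi h']
            have hv := ha1 ⟨i + 1, h'⟩
            omega
          · rw [twb_last hR0 a i hi (by omega)]
            omega
        · rintro ⟨i, hi⟩ hi'
          simp only at hi'
          rw [hends i hi hi', ha0]
        · rintro ⟨k, hk⟩ hk2 h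
          exact hpair k hk hk2 h
    · -- a ∈ A23 : twist block lies in A12
      obtain ⟨ha1, ha2, ha3⟩ := h
      have ha0 : a ⟨0, hR0⟩ = 2 := ha2 ⟨0, hR0⟩ (Or.inl rfl)
      refine Or.inl (Or.inr ⟨?_, ?_⟩)
      · rintro ⟨i, hi⟩
        rcases Nat.lt_or_ge (i + 1) R with h' | h'
        · rw [twb_lt hR0 a i hi h']
          have hv := ha1 ⟨i + 1, h'⟩
          omega
        · rw [twb_last hR0 a i hi (by omega)]
          omega
      · rintro ⟨k, hk⟩ hk2 h
        simp only at hk2 h ⊢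
        rcases Nat.lt_or_ge (k + 2) R with h2 | h2
        · rw [twb_lt hR0 a (k + 1) h (by omega), twb_lt hR0 a k hk h]
          have := ha3 ⟨k + 1, h⟩ (by simpa using by omega) (by simpa using by omega)
          simp only at this
          rw [this]
        · have hk1R : k + 2 = R := by omega
          rw [twb_last hR0 a (k + 1) h (by omega), twb_lt hR0 a k hk h]
          have hlast : a ⟨k + 1, h⟩ = 2 := ha2 ⟨k + 1, h⟩ (Or.inr (show k + 1 = R - 1 by omega))
          omega
  · -- not a removed constant vector
    intro hmem
    simp only [Set.mem_insert_iff, Set.mem_singleton_iff] at hmem hne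
    rcases hmem with h | h
    · exact hne (Or.inl (hconst 1 h))
    · exact hne (Or.inr (hconst 2 h))
end

section
/- Let n ≥ 1. The operation ◁ on ℤ^n makes ℤ^n a (right) rack: for every y ∈ ℤ^n the map x ↦ x ◁ y is a bijection of ℤ^n, and (x ◁ y) ◁ z = (x ◁ z) ◁ (y ◁ z) for all x, y, z ∈ ℤ^n. -/
/-- The rack operation `◁` on `ℤ^n`:
`(x ◁ y)_i = (((x_i ∗ y_1) ∗ y_2) ⋯) ∗ y_n`, where `a ∗ b = 2b − a`. -/
def tri (n : ℕ) (x y : Fin n → ℤ) : Fin n → ℤ :=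
  fun i => (List.ofFn y).foldl (fun a b => 2 * b - a) (x i)

private lemma foldA (l : List ℤ) : ∀ x : ℤ,
    l.foldl (fun a b => 2 * b - a) x
      = l.foldl (fun a b => 2 * b - a) 0 + (-1) ^ l.length * x := by
  induction l with
  | nil => intro x; simp
  | cons b l ih =>
    intro x
    simp only [List.foldl_cons, List.length_cons]
    rw [ih (2 * b - x), ih (2 * b - 0)]
    ring

private lemma foldC (e c : ℤ) (he : e * e = 1) (l : List ℤ) : ∀ x : ℤ,
    (l.map (fun b => c + e * b)).foldl (fun a b => 2 * b - a) x
      = e * l.foldl (fun a b => 2 * b - a) (e * x) + c * (1 - (-1) ^ l.length) := by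
  induction l with
  | nil =>
    intro x
    simp only [List.map_nil, List.foldl_nil, List.length_nil, pow_zero, sub_self, mul_zero,
      add_zero]
    linear_combination (-x) * he
  | cons b l ih =>
    intro x
    simp only [List.map_cons, List.foldl_cons, List.length_cons]
    rw [ih (2 * (c + e * b) - x),
      foldA l (e * (2 * (c + e * b) - x)), foldA l (2 * b - e * x)]
    have : (-1 : ℤ) ^ (l.length + 1) = -(-1) ^ l.length := by ring
    rw [this]
    linear_combination (2 * (-1 : ℤ) ^ l.length * (c + b * e)) * he

theorem stmt_11 (n : ℕ) (hn : 1 ≤ n) :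
    (∀ y : Fin n → ℤ, Function.Bijective (fun x : Fin n → ℤ => tri n x y)) ∧
    (∀ x y z : Fin n → ℤ, tri n (tri n x y) z = tri n (tri n x z) (tri n y z)) := by
  set e : ℤ := (-1) ^ n with hedef
  have he : e * e = 1 := by rw [hedef, ← pow_add]; simp [pow_mul']
  set S : (Fin n → ℤ) → ℤ := fun y => (List.ofFn y).foldl (fun a b => 2 * b - a) 0 with hSdef
  have key : ∀ (x y : Fin n → ℤ) (i : Fin n), tri n x y i = S y + e * x i := by
    intro x y i
    have := foldA (List.ofFn y) (x i)
    simpa [tri, hSdef, hedef] using this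
  constructor
  · intro y
    refine Function.bijective_iff_has_inverse.mpr ⟨fun x i => e * (x i - S y), ?_, ?_⟩
    · intro x
      funext i
      show e * (tri n x y i - S y) = x i
      rw [key x y i]
      linear_combination (x i) * he
    · intro x
      funext i
      show tri n (fun i => e * (x i - S y)) y i = x i
      rw [key (fun i => e * (x i - S y)) y i]
      linear_combination (x i - S y) * he
  · intro x y z
    funext i
    have htyz : tri n y z = fun j => S z + e * y j := by
      funext j; rw [key y z j]
    have hSyz : S (tri n y z) = e * S y + S z * (1 - e) := by
      rw [htyz, hSdef]
      simp only []
      have hmap : List.ofFn (fun j => S z + e * y j)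
          = (List.ofFn y).map (fun b => S z + e * b) := by
        rw [List.map_ofFn]; rfl
      rw [hmap, foldC e (S z) he (List.ofFn y) 0]
      simp only [mul_zero, List.length_ofFn, ← hedef]
      rfl
    rw [key (tri n x y) z i, key x y i, key (tri n x z) (tri n y z) i, key x z i, hSyz]
    ring
end

section
/- Let (R, ∗) be a (right) rack and define x ∗_Q y = (x ∗̄ x) ∗ y. Then (R, ∗_Q) is a quandle: x ∗_Q x = x for all x; for every y ∈ R the map x ↦ x ∗_Q y is a bijection of R; and (x ∗_Q y) ∗_Q z = (x ∗_Q z) ∗_Q (y ∗_Q z) for all x, y, z ∈ R. -/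
/-- The associated quandle operation `x ∗_Q y = (x ∗̄ x) ∗ y` of a rack `(R, ∗)`
with inverse operation `∗̄` (`inv`). -/
def quandleOp {R : Type*} (op inv : R → R → R) : R → R → R :=
  fun x y => op (inv x x) y

theorem stmt_12 {R : Type*} (op inv : R → R → R)
    (hinv₁ : ∀ x y, inv (op x y) y = x) (hinv₂ : ∀ x y, op (inv x y) y = x)
    (hdist : ∀ x y z, op (op x y) z = op (op x z) (op y z)) :
    (∀ x, quandleOp op inv x x = x) ∧
    (∀ y, Function.Bijective (fun x => quandleOp op inv x y)) ∧
    (∀ x y z, quandleOp op inv (quandleOp op inv x y) z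
      = quandleOp op inv (quandleOp op inv x z) (quandleOp op inv y z)) := by
  -- σ commutes with right translations: inv (x∗y) (x∗y) = (inv x x) ∗ y
  have hsig : ∀ x y, inv (op x y) (op x y) = op (inv x x) y := by
    intro x y
    have h1 : op (op (inv x x) y) (op x y) = op x y := by
      rw [← hdist, hinv₂]
    have := congrArg (fun w => inv w (op x y)) h1
    simpa [hinv₁] using this.symm
  -- σ ∘ τ = id
  have hστ : ∀ x, inv (op x x) (op x x) = x := by
    intro x; rw [hsig, hinv₂]
  -- τ ∘ σ = id
  have hτσ : ∀ a, op (inv a a) (inv a a) = a := by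
    intro a
    have h1 : op (op (inv a a) (inv a a)) a = op a a := by
      rw [hdist, hinv₂]
    have := congrArg (fun w => inv w a) h1
    simpa [hinv₁] using this
  -- x ∗ y = x ∗ (y ∗ y)
  have hτ : ∀ w y, op w y = op w (op y y) := by
    intro w y
    have := hdist (inv w y) y y
    rwa [hinv₂] at this
  -- x ∗ (inv y y) = x ∗ y
  have hσ : ∀ w y, op w (inv y y) = op w y := by
    intro w y
    rw [hτ w (inv y y), hτσ]
  refine ⟨?_, ?_, ?_⟩
  · intro x; simp [quandleOp, hinv₂]
  · intro y
    refine Function.bijective_iff_has_inverse.mpr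
      ⟨fun x => op (inv x y) (inv x y), fun x => ?_, fun x => ?_⟩
    · simp only [quandleOp]
      rw [hinv₁, hτσ]
    · simp only [quandleOp]
      rw [hστ, hinv₂]
  · intro x y z
    simp only [quandleOp]
    rw [hsig, hsig, ← hdist, hσ]
end

section
/- Let n ≥ 1 and let ∗_Q be the associated quandle operation of the rack (ℤ^n, ◁), i.e. x ∗_Q y = (x ◁̄ x) ◁ y where ◁̄ is the inverse operation of ◁. Then for all x, y ∈ ℤ^n and all 1 ≤ i ≤ n, (x ∗_Q y)_i = x_i + 2(−x_n + x_{n−1} − x_{n−2} + ⋯ + (−1)^n x_1) + 2((−1)^{n+1} y_1 + (−1)^{n+2} y_2 + ⋯ + y_n); that is, (x ∗_Q y)_i = x_i + 2·Σ_{j=1}^n (−1)^{n−j+1} x_j + 2·Σ_{j=1}^n (−1)^{n−j} y_j. -/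
lemma foldl_aff (l : List ℤ) (a : ℤ) :
    l.foldl (fun a b => 2 * b - a) a
      = (-1) ^ l.length * a + l.foldl (fun a b => 2 * b - a) 0 := by
  induction l generalizing a with
  | nil => simp
  | cons b l ih =>
    simp only [List.foldl_cons, List.length_cons]
    rw [ih (2 * b - a), ih (2 * b - 0), pow_succ]
    ring

lemma foldl_zero (n : ℕ) (y : Fin n → ℤ) :
    (List.ofFn y).foldl (fun a b => 2 * b - a) 0
      = 2 * ∑ j : Fin n, (-1 : ℤ) ^ (n - 1 - (j : ℕ)) * y j := by
  induction n with
  | zero => simp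
  | succ n ih =>
    rw [List.ofFn_succ, List.foldl_cons, foldl_aff, ih, Fin.sum_univ_succ]
    simp only [List.length_ofFn, Fin.val_zero, Fin.val_succ, Function.comp_apply,
      Nat.add_sub_cancel, Nat.sub_zero]
    have h : (∑ j : Fin n, (-1 : ℤ) ^ (n - ((j : ℕ) + 1)) * y j.succ)
        = ∑ j : Fin n, (-1 : ℤ) ^ (n - 1 - (j : ℕ)) * y j.succ :=
      Finset.sum_congr rfl fun j _ => by congr 2; omega
    rw [h]
    ring

lemma tri_eq (n : ℕ) (x y : Fin n → ℤ) (i : Fin n) :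
    tri n x y i = (-1) ^ n * x i + 2 * ∑ j : Fin n, (-1 : ℤ) ^ (n - 1 - (j : ℕ)) * y j := by
  rw [tri, foldl_aff, List.length_ofFn, foldl_zero]

theorem stmt_14 (n : ℕ) (hn : 1 ≤ n)
    (inv : (Fin n → ℤ) → (Fin n → ℤ) → (Fin n → ℤ))
    (hinv₁ : ∀ x y, inv (tri n x y) y = x) (hinv₂ : ∀ x y, tri n (inv x y) y = x) :
    ∀ (x y : Fin n → ℤ) (i : Fin n),
      quandleOp (tri n) inv x y i
        = x i + 2 * (∑ j : Fin n, (-1 : ℤ) ^ (n - (j : ℕ)) * x j)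
            + 2 * (∑ j : Fin n, (-1 : ℤ) ^ (n - (j : ℕ) - 1) * y j) := by
  intro x y i
  have hsq : ((-1 : ℤ) ^ n) * ((-1 : ℤ) ^ n) = 1 := by
    rw [← pow_add]
    exact Even.neg_one_pow ⟨n, rfl⟩
  set Sx : ℤ := ∑ j : Fin n, (-1 : ℤ) ^ (n - 1 - (j : ℕ)) * x j with hSx
  set w : Fin n → ℤ := fun i => (-1) ^ n * (x i - 2 * Sx) with hw
  have hwx : tri n w x = x := by
    funext k
    rw [tri_eq]
    simp only [hw]
    rw [← mul_assoc, hsq]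
    ring
  have hinvxx : inv x x = w := by
    have := hinv₁ w x
    rwa [hwx] at this
  have key : quandleOp (tri n) inv x y i
      = x i - 2 * Sx + 2 * ∑ j : Fin n, (-1 : ℤ) ^ (n - 1 - (j : ℕ)) * y j := by
    rw [quandleOp, hinvxx, tri_eq]
    simp only [hw]
    rw [← mul_assoc, hsq]
    ring
  rw [key]
  have hx : ∑ j : Fin n, (-1 : ℤ) ^ (n - (j : ℕ)) * x j = -Sx := by
    rw [hSx, ← Finset.sum_neg_distrib]
    refine Finset.sum_congr rfl fun j _ => ?_
    have h : n - (j : ℕ) = (n - 1 - (j : ℕ)) + 1 := by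
      have := j.isLt; omega
    rw [h, pow_succ]
    ring
  have hy : (∑ j : Fin n, (-1 : ℤ) ^ (n - (j : ℕ) - 1) * y j)
      = ∑ j : Fin n, (-1 : ℤ) ^ (n - 1 - (j : ℕ)) * y j :=
    Finset.sum_congr rfl fun j _ => by congr 2; omega
  rw [hx, hy]
  ring
end

section
/- Let n ≥ 1 and let τ : ℤ^n → ℤ^n be the kink map of the rack (ℤ^n, ◁), i.e. τ(x) = x ◁ x. Then for all x ∈ ℤ^n and all 1 ≤ i ≤ n, τ(x)_i = (−1)^n x_i + 2(x_n − x_{n−1} + x_{n−2} − ⋯ + (−1)^{n−1} x_1); that is, τ(x)_i = (−1)^n x_i + 2·Σ_{j=1}^n (−1)^{n−j} x_j. -/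
lemma foldl_aux : ∀ (n : ℕ) (y : Fin n → ℤ) (a : ℤ),
    (List.ofFn y).foldl (fun a b => 2 * b - a) a
      = (-1 : ℤ) ^ n * a + 2 * (∑ j : Fin n, (-1 : ℤ) ^ (n - 1 - (j : ℕ)) * y j) := by
  intro n
  induction n with
  | zero => intro y a; simp
  | succ n ih =>
    intro y a
    rw [List.ofFn_succ, List.foldl_cons, ih]
    rw [Fin.sum_univ_succ]
    have h0 : ∀ j : Fin n, n + 1 - 1 - ((j.succ : Fin (n+1)) : ℕ) = n - 1 - (j : ℕ) := by
      intro j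
      simp [Fin.val_succ]
      omega
    have hsum : (∑ j : Fin n, (-1 : ℤ) ^ (n + 1 - 1 - ((j.succ : Fin (n+1)) : ℕ)) * y j.succ)
        = ∑ j : Fin n, (-1 : ℤ) ^ (n - 1 - (j : ℕ)) * y j.succ := by
      apply Finset.sum_congr rfl
      intro j _
      rw [h0 j]
    rw [hsum]
    simp only [Fin.val_zero, Nat.add_sub_cancel, Nat.sub_zero, Fin.succ]
    ring

theorem stmt_15 (n : ℕ) (hn : 1 ≤ n) :
    ∀ (x : Fin n → ℤ) (i : Fin n),
      tri n x x i
        = (-1 : ℤ) ^ n * x i + 2 * (∑ j : Fin n, (-1 : ℤ) ^ (n - 1 - (j : ℕ)) * x j) := by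
  intro x i
  exact foldl_aux n x (x i)
end

section
/- Let n ≥ 1 and let τ : ℤ^n → ℤ^n be the kink map of the rack (ℤ^n, ◁), τ(x) = x ◁ x; τ is a bijection, so its iterates τ^w are defined for all integers w. Then for every integer w: (i) if n is even, { a ∈ ℤ^n : τ^w(a) = a } = { a ∈ ℤ^n : w·(a_1 − a_2 + a_3 − ⋯ − a_n) = 0 }; (ii) if n is odd and w is odd, { a ∈ ℤ^n : τ^w(a) = a } = { (t, t, …, t) : t ∈ ℤ }; (iii) if n is odd and w is even, { a ∈ ℤ^n : τ^w(a) = a } = ℤ^n. Moreover, if n is odd then τ ∘ τ is the identity of ℤ^n. -/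
/-- Alternating sum `∑ (-1)^j a_j`. -/
def stmt16A (n : ℕ) (a : Fin n → ℤ) : ℤ := ∑ j : Fin n, (-1:ℤ)^(j:ℕ) * a j

/-- Candidate inverse of the kink map. -/
def stmt16g (n : ℕ) (a : Fin n → ℤ) : Fin n → ℤ :=
  fun i => (-1:ℤ)^n * a i + 2 * stmt16A n a

lemma stmt16_foldl_step (l : List ℤ) (c : ℤ) :
    l.foldl (fun a b => 2*b-a) c = (-1)^l.length * c + l.foldl (fun a b => 2*b-a) 0 := by
  induction l generalizing c with
  | nil => simp
  | cons b l ih =>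
    simp only [List.foldl_cons, List.length_cons]
    rw [ih (2*b-c), ih (2*b-0)]
    ring

lemma stmt16_K_eq (n : ℕ) (y : Fin n → ℤ) :
    (List.ofFn y).foldl (fun a b => 2*b-a) 0 = -2 * (-1:ℤ)^n * stmt16A n y := by
  unfold stmt16A
  induction n with
  | zero => simp
  | succ n ih =>
    rw [List.ofFn_succ, List.foldl_cons, stmt16_foldl_step, Fin.sum_univ_succ, ih]
    simp only [List.length_ofFn, Fin.val_succ, Fin.val_zero, pow_zero, pow_succ]
    have h : ∑ j : Fin n, (-1:ℤ)^(j:ℕ) * -1 * y j.succ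
        = -∑ j : Fin n, (-1:ℤ)^(j:ℕ) * y j.succ := by
      rw [← Finset.sum_neg_distrib]
      exact Finset.sum_congr rfl fun j _ => by ring
    rw [h]; ring

lemma stmt16_tri_eq (n : ℕ) (x y : Fin n → ℤ) (i : Fin n) :
    tri n x y i = (-1:ℤ)^n * x i - 2 * (-1:ℤ)^n * stmt16A n y := by
  unfold tri
  rw [stmt16_foldl_step, stmt16_K_eq]
  simp [List.length_ofFn]
  ring

lemma stmt16_sigma (n : ℕ) :
    ∑ j : Fin n, (-1:ℤ)^(j:ℕ) = if Even n then 0 else 1 := by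
  rw [Fin.sum_univ_eq_sum_range]
  exact neg_one_geom_sum

lemma stmt16_A_affine (n : ℕ) (a : Fin n → ℤ) (c : ℤ) :
    stmt16A n (fun i => (-1:ℤ)^n * a i + c)
      = (-1:ℤ)^n * stmt16A n a + c * ∑ j : Fin n, (-1:ℤ)^(j:ℕ) := by
  unfold stmt16A
  rw [Finset.mul_sum, Finset.mul_sum, ← Finset.sum_add_distrib]
  exact Finset.sum_congr rfl fun j _ => by ring

lemma stmt16_sq (n : ℕ) : (-1:ℤ)^n * (-1:ℤ)^n = 1 := by
  rw [← pow_add]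
  exact Even.neg_one_pow ⟨n, rfl⟩

lemma stmt16_A_tri (n : ℕ) (a : Fin n → ℤ) : stmt16A n (tri n a a) = stmt16A n a := by
  have h : tri n a a = fun i => (-1:ℤ)^n * a i + (-2 * (-1:ℤ)^n * stmt16A n a) :=
    funext fun i => by rw [stmt16_tri_eq]; ring
  rw [h, stmt16_A_affine, stmt16_sigma]
  rcases Nat.even_or_odd n with hp | hp
  · rw [if_pos hp, hp.neg_one_pow]; ring
  · rw [if_neg (Nat.not_even_iff_odd.mpr hp), hp.neg_one_pow]; ring

lemma stmt16_A_g (n : ℕ) (a : Fin n → ℤ) : stmt16A n (stmt16g n a) = stmt16A n a := by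
  unfold stmt16g
  rw [stmt16_A_affine, stmt16_sigma]
  rcases Nat.even_or_odd n with hp | hp
  · rw [if_pos hp, hp.neg_one_pow]; ring
  · rw [if_neg (Nat.not_even_iff_odd.mpr hp), hp.neg_one_pow]; ring

lemma stmt16_tri_g (n : ℕ) (a : Fin n → ℤ) : tri n (stmt16g n a) (stmt16g n a) = a := by
  funext i
  rw [stmt16_tri_eq, stmt16_A_g]
  show (-1:ℤ)^n * ((-1:ℤ)^n * a i + 2 * stmt16A n a) - 2 * (-1:ℤ)^n * stmt16A n a = a i
  linear_combination a i * stmt16_sq n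

lemma stmt16_g_tri (n : ℕ) (a : Fin n → ℤ) : stmt16g n (tri n a a) = a := by
  funext i
  show (-1:ℤ)^n * tri n a a i + 2 * stmt16A n (tri n a a) = a i
  rw [stmt16_tri_eq, stmt16_A_tri]
  linear_combination (a i - 2 * stmt16A n a) * stmt16_sq n

lemma stmt16_tri_eq_g (n : ℕ) (hodd : Odd n) (a : Fin n → ℤ) :
    tri n a a = stmt16g n a := by
  funext i
  rw [stmt16_tri_eq]
  show _ = (-1:ℤ)^n * a i + 2 * stmt16A n a
  rw [hodd.neg_one_pow]
  ring

lemma stmt16_tri_invol (n : ℕ) (hodd : Odd n) (a : Fin n → ℤ) :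
    tri n (tri n a a) (tri n a a) = a := by
  rw [stmt16_tri_eq_g n hodd a]
  exact stmt16_tri_g n a

theorem stmt_16 (n : ℕ) (hn : 1 ≤ n) :
    Function.Bijective (fun x : Fin n → ℤ => tri n x x) ∧
    (∀ e : Equiv.Perm (Fin n → ℤ), (∀ x, e x = tri n x x) →
      ∀ w : ℤ,
        (Even n →
          {a : Fin n → ℤ | (e ^ w) a = a}
            = {a : Fin n → ℤ | w * (∑ j : Fin n, (-1 : ℤ) ^ (j : ℕ) * a j) = 0}) ∧
        (Odd n → Odd w →
          {a : Fin n → ℤ | (e ^ w) a = a} = {a : Fin n → ℤ | ∃ t : ℤ, ∀ i, a i = t}) ∧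
        (Odd n → Even w →
          {a : Fin n → ℤ | (e ^ w) a = a} = Set.univ)) ∧
    (Odd n → (fun x : Fin n → ℤ => tri n x x) ∘ (fun x => tri n x x) = id) := by
  refine ⟨?_, ?_, ?_⟩
  · exact Function.bijective_iff_has_inverse.mpr
      ⟨stmt16g n, fun a => stmt16_g_tri n a, fun a => stmt16_tri_g n a⟩
  · intro e he w
    have he' : ∀ a : Fin n → ℤ, e a
        = fun i => (-1:ℤ)^n * a i - 2 * (-1:ℤ)^n * stmt16A n a :=
      fun a => by rw [he]; exact funext fun i => stmt16_tri_eq n a a i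
    have hAe : ∀ a, stmt16A n (e a) = stmt16A n a := fun a => by
      rw [he]; exact stmt16_A_tri n a
    have hinv : ∀ a, e⁻¹ a = stmt16g n a := by
      intro a
      have h2 : e (stmt16g n a) = a := by rw [he]; exact stmt16_tri_g n a
      calc e⁻¹ a = e⁻¹ (e (stmt16g n a)) := by rw [h2]
        _ = stmt16g n a := e.symm_apply_apply _
    rcases Nat.even_or_odd n with hev | hodd
    · -- n even
      have hε : (-1:ℤ)^n = 1 := hev.neg_one_pow
      have hw : ∀ (w : ℤ) (a : Fin n → ℤ),
          (e ^ w) a = fun i => a i - 2 * w * stmt16A n a := by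
        intro w
        induction w using Int.induction_on with
        | zero => intro a; simp
        | succ k ih =>
          intro a
          rw [zpow_add_one, Equiv.Perm.mul_apply, ih (e a)]
          funext i
          simp only [hAe]
          simp only [he', hε]
          push_cast
          ring
        | pred k ih =>
          intro a
          rw [zpow_sub_one, Equiv.Perm.mul_apply, ih (e⁻¹ a)]
          funext i
          simp only [hinv, stmt16_A_g, stmt16g, hε]
          push_cast
          ring
      refine ⟨fun _ => ?_, fun hodd _ => absurd hodd (Nat.not_odd_iff_even.mpr hev),
        fun hodd _ => absurd hodd (Nat.not_odd_iff_even.mpr hev)⟩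
      ext a
      simp only [Set.mem_setOf_eq, hw w a]
      constructor
      · intro h
        have h0 : a ⟨0, hn⟩ - 2 * w * stmt16A n a = a ⟨0, hn⟩ := by
          have := congrFun h ⟨0, hn⟩; simpa using this
        show w * stmt16A n a = 0
        linarith
      · intro h
        have h' : w * stmt16A n a = 0 := h
        funext i
        linarith
    · -- n odd
      have hε : (-1:ℤ)^n = -1 := hodd.neg_one_pow
      have hσ : ∑ j : Fin n, (-1:ℤ)^(j:ℕ) = 1 := by
        rw [stmt16_sigma, if_neg (Nat.not_even_iff_odd.mpr hodd)]
      have hee : ∀ a : Fin n → ℤ, e (e a) = a := fun a => by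
        rw [he, he a, stmt16_tri_eq_g n hodd a]
        exact stmt16_tri_g n a
      have he2 : e * e = 1 := Equiv.ext fun a => by
        rw [Equiv.Perm.mul_apply, hee, Equiv.Perm.one_apply]
      have he2z : e ^ (2:ℤ) = 1 := by
        rw [show (2:ℤ) = ((2:ℕ):ℤ) from rfl, zpow_natCast, pow_two, he2]
      refine ⟨fun hev => absurd hev (Nat.not_even_iff_odd.mpr hodd), ?_, ?_⟩
      · intro _ hwodd
        obtain ⟨k, hk⟩ := hwodd
        have hew : e ^ w = e := by
          rw [hk, zpow_add, zpow_mul, he2z, one_zpow, one_mul, zpow_one]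
        ext a
        simp only [Set.mem_setOf_eq, hew]
        constructor
        · intro h
          refine ⟨stmt16A n a, fun i => ?_⟩
          have hi : (-1:ℤ)^n * a i - 2 * (-1:ℤ)^n * stmt16A n a = a i := by
            have := congrFun h i
            rw [he' a] at this
            simpa using this
          rw [hε] at hi
          linarith
        · rintro ⟨t, ht⟩
          have hA : stmt16A n a = t := by
            unfold stmt16A
            calc ∑ j : Fin n, (-1:ℤ)^(j:ℕ) * a j
                = ∑ j : Fin n, (-1:ℤ)^(j:ℕ) * t :=
                  Finset.sum_congr rfl fun j _ => by rw [ht j]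
              _ = (∑ j : Fin n, (-1:ℤ)^(j:ℕ)) * t := by rw [Finset.sum_mul]
              _ = t := by rw [hσ, one_mul]
          rw [he' a]
          funext i
          rw [hε, ht i, hA]
          ring
      · intro _ hwev
        obtain ⟨k, hk⟩ := hwev
        have hew : e ^ w = 1 := by
          rw [hk, show k + k = 2 * k from by ring, zpow_mul, he2z, one_zpow]
        apply Set.eq_univ_iff_forall.mpr
        intro a
        simp [hew]
  · intro hodd
    funext a
    exact stmt16_tri_invol n hodd a
end

section
/- Let n ≥ 1 and let ∘ be the associated quandle operation of the rack (ℤ^n, ◁), given explicitly by (x ∘ y)_i = x_i + 2·Σ_{j=1}^n (−1)^{n−j+1} x_j + 2·Σ_{j=1}^n (−1)^{n−j} y_j. Then every connected subrack of (ℤ^n, ∘) (i.e. every connected subquandle of the associated quandle) has at most one element. -/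
/-- The associated quandle operation `∘` of the rack `(ℤ^n, ◁)`, given explicitly by
`(x ∘ y)_i = x_i + 2·Σ_j (−1)^{n−j+1} x_j + 2·Σ_j (−1)^{n−j} y_j` (1-indexed). -/
def qOp (n : ℕ) (x y : Fin n → ℤ) : Fin n → ℤ :=
  fun i => x i + 2 * (∑ j : Fin n, (-1 : ℤ) ^ (n - (j : ℕ)) * x j)
      + 2 * (∑ j : Fin n, (-1 : ℤ) ^ (n - (j : ℕ) - 1) * y j)

/-- `S` is a subrack: closed under the operation `op` and its inverse `inv`. -/
def IsSubrack {α : Type*} (op inv : α → α → α) (S : Set α) : Prop :=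
  ∀ x ∈ S, ∀ y ∈ S, op x y ∈ S ∧ inv x y ∈ S

/-- `S` is connected: any `v ∈ S` is obtained from any `u ∈ S` by finitely many
right translations `z ↦ op z s`, `z ↦ inv z s` with `s ∈ S`. -/
def IsConnectedSubrack {α : Type*} (op inv : α → α → α) (S : Set α) : Prop :=
  ∀ u ∈ S, ∀ v ∈ S,
    Relation.ReflTransGen (fun a b => ∃ s ∈ S, b = op a s ∨ b = inv a s) u v

/-- `M` is the maximal connected subrack containing `x`: a connected subrack
containing `x` that contains every connected subrack containing `x`. -/
def IsMaxConnSubrack {α : Type*} (op inv : α → α → α) (x : α) (M : Set α) : Prop :=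
  IsSubrack op inv M ∧ IsConnectedSubrack op inv M ∧ x ∈ M ∧
    ∀ S : Set α, IsSubrack op inv S → IsConnectedSubrack op inv S → x ∈ S → S ⊆ M

/-- The alternating sum `Σ_j (-1)^(n-j) z_j`. -/
def Asum (n : ℕ) (z : Fin n → ℤ) : ℤ := ∑ j : Fin n, (-1:ℤ)^(n-(j:ℕ)) * z j

/-- The alternating sum of signs. -/
def esum (n : ℕ) : ℤ := ∑ j : Fin n, (-1:ℤ)^(n-(j:ℕ))

lemma second_sum_eq_neg (n : ℕ) (y : Fin n → ℤ) :
    (∑ j : Fin n, (-1:ℤ)^(n-(j:ℕ)-1) * y j) = -Asum n y := by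
  rw [Asum, ← Finset.sum_neg_distrib]
  refine Finset.sum_congr rfl fun j _ => ?_
  have hj : (j:ℕ) < n := j.isLt
  have h : n - (j:ℕ) = (n - (j:ℕ) - 1) + 1 := by omega
  conv_rhs => rw [h]
  rw [pow_succ]
  ring

lemma qOp_apply (n : ℕ) (x y : Fin n → ℤ) (i : Fin n) :
    qOp n x y i = x i + 2 * Asum n x - 2 * Asum n y := by
  show x i + 2 * _ + 2 * _ = _
  rw [second_sum_eq_neg]
  show x i + 2 * Asum n x + 2 * -Asum n y = _
  ring

lemma Asum_shift (n : ℕ) (x z : Fin n → ℤ) (t : ℤ) (h : ∀ i, z i = x i + t) :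
    Asum n z = Asum n x + t * esum n := by
  unfold Asum esum
  rw [Finset.mul_sum, ← Finset.sum_add_distrib]
  refine Finset.sum_congr rfl fun j _ => ?_
  rw [h j]; ring

theorem stmt_17 (n : ℕ) (hn : 1 ≤ n)
    (inv : (Fin n → ℤ) → (Fin n → ℤ) → (Fin n → ℤ))
    (hinv₁ : ∀ x y, inv (qOp n x y) y = x) (hinv₂ : ∀ x y, qOp n (inv x y) y = x)
    (S : Set (Fin n → ℤ))
    (hsub : IsSubrack (qOp n) inv S) (hconn : IsConnectedSubrack (qOp n) inv S) :
    S.Subsingleton := by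
  intro x hx y hy
  set r : (Fin n → ℤ) → (Fin n → ℤ) → Prop :=
    fun a b => ∃ s ∈ S, b = qOp n a s ∨ b = inv a s with hr
  have i0 : Fin n := ⟨0, hn⟩
  -- Claim B: every element of S is a constant shift of x
  have claimB0 : ∀ w, Relation.ReflTransGen r x w → ∃ t : ℤ, ∀ i, w i = x i + t := by
    intro w hpath
    induction hpath with
    | refl => exact ⟨0, fun i => by ring⟩
    | @tail b c hxb hstep ih =>
      obtain ⟨t, ht⟩ := ih
      obtain ⟨s, _, hcase⟩ := hstep
      rcases hcase with h1 | h2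
      · refine ⟨t + 2 * Asum n b - 2 * Asum n s, fun i => ?_⟩
        rw [h1, qOp_apply, ht i]; ring
      · have hb : b = qOp n c s := by rw [h2, hinv₂]
        refine ⟨t - (2 * Asum n c - 2 * Asum n s), fun i => ?_⟩
        have h3 := congrFun hb i
        rw [qOp_apply] at h3
        have hbi := ht i
        linarith [h3, hbi]
  have claimB : ∀ z ∈ S, ∃ t : ℤ, ∀ i, z i = x i + t :=
    fun z hz => claimB0 z (hconn x hx z hz)
  -- membership along paths
  have memstep : ∀ a b, a ∈ S → r a b → b ∈ S := by
    intro a b ha ⟨s, hs, hcase⟩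
    rcases hcase with h1 | h2
    · rw [h1]; exact (hsub a ha s hs).1
    · rw [h2]; exact (hsub a ha s hs).2
  -- Claim C: 2^k divides every shift, for all k
  have claimC : ∀ k : ℕ, ∀ z ∈ S, ∀ t : ℤ, (∀ i, z i = x i + t) → (2^k : ℤ) ∣ t := by
    intro k
    induction k with
    | zero => intro z _ t _; simp
    | succ k IH =>
      intro z hz t ht
      -- strengthen along the path from x to z
      have main : ∀ w, Relation.ReflTransGen r x w →
          w ∈ S ∧ ∃ tw : ℤ, (∀ i, w i = x i + tw) ∧ (2^(k+1) : ℤ) ∣ tw := by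
        intro w hpath
        induction hpath with
        | refl => exact ⟨hx, 0, fun i => by ring, dvd_zero _⟩
        | @tail b c hxb hstep ih =>
          obtain ⟨hbS, tb, htb, hdvdb⟩ := ih
          obtain ⟨s, hsS, hcase⟩ := hstep
          have hcS : c ∈ S := memstep b c hbS ⟨s, hsS, hcase⟩
          obtain ⟨ts, hts⟩ := claimB0 s (hconn x hx s hsS)
          have hdvds : (2^k : ℤ) ∣ ts := IH s hsS ts hts
          have hdvdb' : (2^k : ℤ) ∣ tb := dvd_trans (pow_dvd_pow 2 (Nat.le_succ k)) hdvdb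
          have hAs : Asum n s = Asum n x + ts * esum n := Asum_shift n x s ts hts
          have hAb : Asum n b = Asum n x + tb * esum n := Asum_shift n x b tb htb
          rcases hcase with h1 | h2
          · refine ⟨hcS, tb + 2 * esum n * (tb - ts), fun i => ?_, ?_⟩
            · rw [h1, qOp_apply, htb i, hAb, hAs]; ring
            · have : (2^(k+1) : ℤ) ∣ 2 * esum n * (tb - ts) := by
                have h2k : (2^k : ℤ) ∣ (tb - ts) := dvd_sub hdvdb' hdvds
                obtain ⟨m, hm⟩ := h2k
                exact ⟨esum n * m, by rw [hm]; ring⟩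
              exact dvd_add hdvdb this
          · -- c = inv b s, b = qOp c s
            obtain ⟨tc, htc⟩ := claimB0 c (Relation.ReflTransGen.tail hxb ⟨s, hsS, Or.inr h2⟩)
            have hdvdc : (2^k : ℤ) ∣ tc := IH c hcS tc htc
            have hAc : Asum n c = Asum n x + tc * esum n := Asum_shift n x c tc htc
            have hb : b = qOp n c s := by rw [h2, hinv₂]
            have hkey : tb = tc + 2 * esum n * (tc - ts) := by
              have := congrFun hb i0
              rw [qOp_apply, htb i0, htc i0, hAc, hAs] at this
              linarith
            refine ⟨hcS, tc, htc, ?_⟩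
            have h2k : (2^(k+1) : ℤ) ∣ 2 * esum n * (tc - ts) := by
              have : (2^k : ℤ) ∣ (tc - ts) := dvd_sub hdvdc hdvds
              obtain ⟨m, hm⟩ := this
              exact ⟨esum n * m, by rw [hm]; ring⟩
            have : tc = tb - 2 * esum n * (tc - ts) := by linarith
            rw [this]
            exact dvd_sub hdvdb h2k
      obtain ⟨_, tw, htw, hdvd⟩ := main z (hconn x hx z hz)
      have : tw = t := by
        have h1 := htw i0; have h2 := ht i0; linarith
      rwa [this] at hdvd
  -- conclude: the shift of y is 0
  obtain ⟨t, ht⟩ := claimB y hy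
  have ht0 : t = 0 := by
    by_contra h0
    have habs : (0 : ℤ) < |t| := abs_pos.mpr h0
    have hdvd : (2 ^ t.natAbs : ℤ) ∣ |t| := (dvd_abs _ _).mpr (claimC t.natAbs y hy t ht)
    have hle := Int.le_of_dvd habs hdvd
    have hlt : (t.natAbs : ℤ) < 2 ^ t.natAbs := by
      exact_mod_cast (Nat.lt_two_pow_self : t.natAbs < 2 ^ t.natAbs)
    rw [Int.abs_eq_natAbs] at hle
    omega
  funext i
  rw [ht i, ht0]; ring
end

section
/- Let (R, ∗) be a (right) rack, let ∗_Q be its associated quandle operation x ∗_Q y = (x ∗̄ x) ∗ y, and let τ(x) = x ∗ x be its kink map (a bijection of R, so its iterates τ^m are defined for all integers m). Fix x ∈ R. Suppose M is the maximal connected subrack of (R, ∗) containing x and M_Q is the maximal connected subrack of (R, ∗_Q) containing x. Then M = ⋃_{m ∈ ℤ} τ^m(M_Q). -/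
theorem stmt_18 {R : Type*} (op inv : R → R → R)
    (hinv₁ : ∀ x y, inv (op x y) y = x) (hinv₂ : ∀ x y, op (inv x y) y = x)
    (hdist : ∀ x y z, op (op x y) z = op (op x z) (op y z))
    (invQ : R → R → R)
    (hinvQ₁ : ∀ x y, invQ (quandleOp op inv x y) y = x)
    (hinvQ₂ : ∀ x y, quandleOp op inv (invQ x y) y = x)
    (e : Equiv.Perm R) (he : ∀ x, e x = op x x)
    (x : R) (M MQ : Set R)
    (hM : IsMaxConnSubrack op inv x M)
    (hMQ : IsMaxConnSubrack (quandleOp op inv) invQ x MQ) :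
    M = ⋃ m : ℤ, (e ^ m) '' MQ := by
  -- right translations are injective
  have opcancel : ∀ {a b : R} (s : R), op a s = op b s → a = b := by
    intro a b s h
    have := congrArg (fun z => inv z s) h
    simpa [hinv₁] using this
  -- e commutes with translations
  have comm1 : ∀ z y, e (op z y) = op (e z) y := by
    intro z y
    rw [he, he]
    exact (hdist z z y).symm
  have comm2 : ∀ z y, e (inv z y) = inv (e z) y := by
    intro z y
    have h := comm1 (inv z y) y
    rw [hinv₂] at h
    rw [h, hinv₁]
  have comm1' : ∀ z y, e.symm (op z y) = op (e.symm z) y := by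
    intro z y
    apply e.injective
    rw [Equiv.apply_symm_apply, comm1, Equiv.apply_symm_apply]
  have comm2' : ∀ z y, e.symm (inv z y) = inv (e.symm z) y := by
    intro z y
    apply e.injective
    rw [Equiv.apply_symm_apply, comm2, Equiv.apply_symm_apply]
  have esymm_eq : ∀ z, e.symm z = inv z z := by
    intro z
    apply e.injective
    rw [Equiv.apply_symm_apply, comm2, he, hinv₁]
  have einv_apply : ∀ z, (e⁻¹ : Equiv.Perm R) z = e.symm z := fun _ => rfl
  -- zpowers of e commute with translations
  have commz1 : ∀ (m : ℤ) (z y : R), (e ^ m) (op z y) = op ((e ^ m) z) y := by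
    intro m
    induction m using Int.induction_on with
    | zero => simp
    | succ n ih =>
      intro z y
      have h : ((n : ℤ) + 1) = 1 + (n : ℤ) := by ring
      rw [h, zpow_add, zpow_one]
      simp only [Equiv.Perm.mul_apply]
      rw [ih, comm1]
    | pred n ih =>
      intro z y
      have h : (-(n : ℤ) - 1) = -1 + (-(n : ℤ)) := by ring
      rw [h, zpow_add, zpow_neg_one]
      simp only [Equiv.Perm.mul_apply, einv_apply]
      rw [ih, comm1']
  have commz2 : ∀ (m : ℤ) (z y : R), (e ^ m) (inv z y) = inv ((e ^ m) z) y := by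
    intro m
    induction m using Int.induction_on with
    | zero => simp
    | succ n ih =>
      intro z y
      have h : ((n : ℤ) + 1) = 1 + (n : ℤ) := by ring
      rw [h, zpow_add, zpow_one]
      simp only [Equiv.Perm.mul_apply]
      rw [ih, comm2]
    | pred n ih =>
      intro z y
      have h : (-(n : ℤ) - 1) = -1 + (-(n : ℤ)) := by ring
      rw [h, zpow_add, zpow_neg_one]
      simp only [Equiv.Perm.mul_apply, einv_apply]
      rw [ih, comm2']
  -- translation by e s equals translation by s
  have trans_e : ∀ w s, op w (e s) = op w s := by
    intro w s
    have h := hdist (inv w s) s s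
    rw [hinv₂] at h
    rw [he]
    exact h.symm
  have trans_esymm : ∀ w s, op w (e.symm s) = op w s := by
    intro w s
    have h := trans_e w (e.symm s)
    rw [Equiv.apply_symm_apply] at h
    exact h.symm
  have transz : ∀ (m : ℤ) (w s : R), op w ((e ^ m) s) = op w s := by
    intro m
    induction m using Int.induction_on with
    | zero => simp
    | succ n ih =>
      intro w s
      have h : ((n : ℤ) + 1) = 1 + (n : ℤ) := by ring
      rw [h, zpow_add, zpow_one]
      simp only [Equiv.Perm.mul_apply]
      rw [trans_e, ih]
    | pred n ih =>
      intro w s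
      have h : (-(n : ℤ) - 1) = -1 + (-(n : ℤ)) := by ring
      rw [h, zpow_add, zpow_neg_one]
      simp only [Equiv.Perm.mul_apply, einv_apply]
      rw [trans_esymm, ih]
  have itransz : ∀ (m : ℤ) (w s : R), inv w ((e ^ m) s) = inv w s := by
    intro m w s
    apply opcancel s
    calc op (inv w ((e ^ m) s)) s = op (inv w ((e ^ m) s)) ((e ^ m) s) := (transz m _ s).symm
      _ = w := hinv₂ _ _
      _ = op (inv w s) s := (hinv₂ _ _).symm
  -- quandle operation formulas
  have qop_eq : ∀ z s, quandleOp op inv z s = e.symm (op z s) := by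
    intro z s
    show op (inv z z) s = e.symm (op z s)
    rw [comm1', esymm_eq]
  have invQ_eq : ∀ z s, invQ z s = e (inv z s) := by
    intro z s
    have h1 : quandleOp op inv (e (inv z s)) s = z := by
      rw [qop_eq, ← comm1, hinv₂, Equiv.symm_apply_apply]
    calc invQ z s = invQ (quandleOp op inv (e (inv z s)) s) s := by rw [h1]
      _ = e (inv z s) := hinvQ₁ _ _
  have qtransz : ∀ (m : ℤ) (z s : R), quandleOp op inv z ((e ^ m) s) = quandleOp op inv z s := by
    intro m z s
    rw [qop_eq, qop_eq, transz]
  have invQtransz : ∀ (m : ℤ) (z s : R), invQ z ((e ^ m) s) = invQ z s := by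
    intro m z s
    rw [invQ_eq, invQ_eq, itransz]
  -- key formulas
  have epowadd : ∀ (m k : ℤ) (u : R), (e ^ m) ((e ^ k) u) = (e ^ (m + k)) u := by
    intro m k u
    rw [zpow_add]
    rfl
  have keyop : ∀ (m : ℤ) (u s : R), op ((e ^ m) u) s = (e ^ (m + 1)) (quandleOp op inv u s) := by
    intro m u s
    rw [qop_eq]
    have h2 : (e ^ (m + 1)) (e.symm (op u s)) = (e ^ m) (op u s) := by
      rw [zpow_add_one]
      simp only [Equiv.Perm.mul_apply]
      rw [Equiv.apply_symm_apply]
    rw [h2, commz1]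
  have keyinv : ∀ (m : ℤ) (u s : R), inv ((e ^ m) u) s = (e ^ (m - 1)) (invQ u s) := by
    intro m u s
    rw [invQ_eq]
    have h2 : (e ^ (m - 1)) (e (inv u s)) = (e ^ m) (inv u s) := by
      have h3 : (e ^ (m - 1)) (e (inv u s)) = (e ^ (m - 1) * e) (inv u s) := rfl
      rw [h3, ← zpow_add_one]
      have h4 : m - 1 + 1 = m := by ring
      rw [h4]
    rw [h2, commz2]
  -- set up N
  set N : Set R := ⋃ m : ℤ, (e ^ m) '' MQ with hNdef
  have memN : ∀ {a : R}, a ∈ N ↔ ∃ (m : ℤ) (u : R), u ∈ MQ ∧ (e ^ m) u = a := by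
    intro a
    rw [hNdef]
    simp only [Set.mem_iUnion, Set.mem_image]
  have hNepow : ∀ (m : ℤ) (z : R), z ∈ N → (e ^ m) z ∈ N := by
    intro m z hz
    obtain ⟨k, u, hu, rfl⟩ := memN.mp hz
    exact memN.mpr ⟨m + k, u, hu, (epowadd m k u).symm⟩
  have hNsub : IsSubrack op inv N := by
    intro a ha b hb
    obtain ⟨m, u, hu, rfl⟩ := memN.mp ha
    obtain ⟨k, v, hv, rfl⟩ := memN.mp hb
    constructor
    · rw [transz k, keyop]
      exact memN.mpr ⟨m + 1, _, (hMQ.1 u hu v hv).1, rfl⟩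
    · rw [itransz k, keyinv]
      exact memN.mpr ⟨m - 1, _, (hMQ.1 u hu v hv).2, rfl⟩
  have hNx : x ∈ N := memN.mpr ⟨0, x, hMQ.2.2.1, by simp⟩
  have hMQN : MQ ⊆ N := fun u hu => memN.mpr ⟨0, u, hu, by simp⟩
  -- the translation relation on N
  set r : R → R → Prop := fun a b => ∃ s ∈ N, b = op a s ∨ b = inv a s with hrdef
  have chainEpow : ∀ (m : ℤ) (z : R), z ∈ N → Relation.ReflTransGen r z ((e ^ m) z) := by
    intro m
    induction m using Int.induction_on with
    | zero => intro z hz; simpa using Relation.ReflTransGen.refl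
    | succ n ih =>
      intro z hz
      have h1 : (e ^ ((n : ℤ) + 1)) z = e ((e ^ (n : ℤ)) z) := by
        have h : ((n : ℤ) + 1) = 1 + (n : ℤ) := by ring
        rw [h, zpow_add, zpow_one]; rfl
      rw [h1]
      refine (ih z hz).tail ?_
      exact ⟨(e ^ (n : ℤ)) z, hNepow _ z hz, Or.inl (he _)⟩
    | pred n ih =>
      intro z hz
      have h1 : (e ^ (-(n : ℤ) - 1)) z = e.symm ((e ^ (-(n : ℤ))) z) := by
        have h : (-(n : ℤ) - 1) = -1 + (-(n : ℤ)) := by ring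
        rw [h, zpow_add, zpow_neg_one]; rfl
      rw [h1]
      refine (ih z hz).tail ?_
      exact ⟨(e ^ (-(n : ℤ))) z, hNepow _ z hz, Or.inr (esymm_eq _)⟩
  -- convert quandle chains (with translating elements in MQ) into rack chains in N
  have hconv : ∀ a b : R,
      Relation.ReflTransGen (fun a b => ∃ s ∈ MQ, b = quandleOp op inv a s ∨ b = invQ a s) a b →
      a ∈ N → Relation.ReflTransGen r a b ∧ b ∈ N := by
    intro a b hab haN
    induction hab with
    | refl => exact ⟨Relation.ReflTransGen.refl, haN⟩
    | @tail b c hab hbc ih =>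
      obtain ⟨hchain, hbN⟩ := ih
      obtain ⟨s, hsMQ, hc⟩ := hbc
      have hsN : s ∈ N := hMQN hsMQ
      rcases hc with hc | hc
      · subst hc
        constructor
        · have step1 : r b (inv b b) := ⟨b, hbN, Or.inr rfl⟩
          have step2 : r (inv b b) (quandleOp op inv b s) := ⟨s, hsN, Or.inl rfl⟩
          exact (hchain.tail step1).tail step2
        · rw [qop_eq]
          have h5 : e.symm (op b s) = (e ^ (-1 : ℤ)) (op b s) := by rw [zpow_neg_one]; rfl
          rw [h5]
          exact hNepow _ _ (hNsub _ hbN s hsN).1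
      · subst hc
        have hwN : inv b s ∈ N := (hNsub _ hbN s hsN).2
        constructor
        · rw [invQ_eq, he]
          have step1 : r b (inv b s) := ⟨s, hsN, Or.inr rfl⟩
          have step2 : r (inv b s) (op (inv b s) (inv b s)) := ⟨inv b s, hwN, Or.inl rfl⟩
          exact (hchain.tail step1).tail step2
        · rw [invQ_eq]
          have h5 : e (inv b s) = (e ^ (1 : ℤ)) (inv b s) := by rw [zpow_one]
          rw [h5]
          exact hNepow _ _ hwN
  have hNconn : IsConnectedSubrack op inv N := by
    intro u' hu' v' hv'
    obtain ⟨m, u, hu, rfl⟩ := memN.mp hu'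
    obtain ⟨k, v, hv, rfl⟩ := memN.mp hv'
    have huN : u ∈ N := hMQN hu
    have hvN : v ∈ N := hMQN hv
    have c1 : Relation.ReflTransGen r ((e ^ m) u) u := by
      have h := chainEpow (-m) _ (hNepow m u huN)
      rw [epowadd, neg_add_cancel] at h
      simpa using h
    have c2 : Relation.ReflTransGen r u v := (hconv u v (hMQ.2.1 u hu v hv) huN).1
    exact (c1.trans c2).trans (chainEpow k v hvN)
  have hNM : N ⊆ M := hM.2.2.2 N hNsub hNconn hNx
  -- Part B : M ⊆ N
  set rq : R → R → Prop := fun a b => ∃ s ∈ M, b = quandleOp op inv a s ∨ b = invQ a s with hrqdef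
  set SQ : Set R := {v | Relation.ReflTransGen rq x v} with hSQdef
  have hxSQ : x ∈ SQ := Relation.ReflTransGen.refl
  have SQM : SQ ⊆ M := by
    intro v hv
    induction hv with
    | refl => exact hM.2.2.1
    | tail hab hbc ih =>
      obtain ⟨s, hsM, hc⟩ := hbc
      rcases hc with hc | hc
      · subst hc
        show op (inv _ _) s ∈ M
        exact (hM.1 _ (hM.1 _ ih _ ih).2 s hsM).1
      · subst hc
        rw [invQ_eq, he]
        have hw : inv _ s ∈ M := (hM.1 _ ih s hsM).2
        exact (hM.1 _ hw _ hw).1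
  have B2 : ∀ v ∈ M, ∃ (m : ℤ) (u : R), u ∈ SQ ∧ (e ^ m) u = v := by
    intro v hv
    have hchain := hM.2.1 x hM.2.2.1 v hv
    clear hv
    induction hchain with
    | refl => exact ⟨0, x, hxSQ, by simp⟩
    | tail hab hbc ih =>
      obtain ⟨m, u, hu, rfl⟩ := ih
      obtain ⟨s, hsM, hc⟩ := hbc
      rcases hc with hc | hc
      · subst hc
        exact ⟨m + 1, quandleOp op inv u s, hu.tail ⟨s, hsM, Or.inl rfl⟩, (keyop m u s).symm⟩
      · subst hc
        exact ⟨m - 1, invQ u s, hu.tail ⟨s, hsM, Or.inr rfl⟩, (keyinv m u s).symm⟩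
  -- SQ is a connected subrack of the quandle
  have SQsub : IsSubrack (quandleOp op inv) invQ SQ := by
    intro u hu v hv
    exact ⟨hu.tail ⟨v, SQM hv, Or.inl rfl⟩, hu.tail ⟨v, SQM hv, Or.inr rfl⟩⟩
  set rq2 : R → R → Prop := fun a b => ∃ s ∈ SQ, b = quandleOp op inv a s ∨ b = invQ a s
    with hrq2def
  have rq_to_rq2 : ∀ a b, rq a b → rq2 a b := by
    intro a b ⟨s, hsM, h⟩
    obtain ⟨m, t, htSQ, rfl⟩ := B2 s hsM
    refine ⟨t, htSQ, ?_⟩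
    rcases h with h | h
    · exact Or.inl (by rw [h, qtransz])
    · exact Or.inr (by rw [h, invQtransz])
  have rq2symm : Symmetric rq2 := by
    intro a b ⟨t, ht, h⟩
    rcases h with h | h
    · exact ⟨t, ht, Or.inr (by rw [h, hinvQ₁])⟩
    · exact ⟨t, ht, Or.inl (by rw [h, hinvQ₂])⟩
  have SQconn : IsConnectedSubrack (quandleOp op inv) invQ SQ := by
    intro u hu v hv
    have h1 : Relation.ReflTransGen rq2 x u := Relation.ReflTransGen.mono rq_to_rq2 _ _ hu
    have h2 : Relation.ReflTransGen rq2 x v := Relation.ReflTransGen.mono rq_to_rq2 _ _ hv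
    haveI : Std.Symm rq2 := ⟨rq2symm⟩
    exact (Std.Symm.symm _ _ h1).trans h2
  have SQMQ : SQ ⊆ MQ := hMQ.2.2.2 SQ SQsub SQconn hxSQ
  apply Set.Subset.antisymm
  · intro v hv
    obtain ⟨m, u, hu, rfl⟩ := B2 v hv
    exact memN.mpr ⟨m, u, SQMQ hu, rfl⟩
  · exact hNM
end
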